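/- arXiv:2307.14033 — 4 statements merged into one kernel-verified Lean document; each statement's English description precedes it below -/
import Mathlib

section
/- For m ≥ 3 odd, the 3-percolation number of the grid P₃ □ Pₘ equals (3/2)(m+1) − 1. -/
open SimpleGraph

/-- The set of vertices eventually infected in `r`-neighbor bootstrap percolation
on the graph `G`, starting from the initially infected set `A`. -/
inductive Infected {V : Type*} (G : SimpleGraph V) (r : ℕ) (A : Set V) : V → Prop
  | init {v : V} : v ∈ A → Infected G r A v
  | step {v : V} (T : Finset V) : r ≤ T.card → (∀ u ∈ T, G.Adj u v) →
      (∀ u ∈ T, Infected G r A u) → Infected G r A v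

/-- `A` is an `r`-percolating set of `G`. -/
def Percolates {V : Type*} (G : SimpleGraph V) (r : ℕ) (A : Set V) : Prop :=
  ∀ v, Infected G r A v

/-- The `r`-percolation number of `G`: minimum size of an `r`-percolating set. -/
noncomputable def percNum (V : Type*) [Fintype V] (G : SimpleGraph V) (r : ℕ) : ℕ :=
  sInf {k | ∃ A : Finset V, A.card = k ∧ Percolates G r (↑A)}

/-- The `n × m` grid graph `Pₙ □ Pₘ`. -/
def gridGraph (n m : ℕ) : SimpleGraph (Fin n × Fin m) :=
  (pathGraph n) □ (pathGraph m)

/-- A boundary vertex of a grid: degree at most 3. -/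
def IsBoundary {V : Type*} (G : SimpleGraph V) (v : V) : Prop :=
  (G.neighborSet v).ncard ≤ 3


namespace BP
abbrev St := Bool × Bool × Bool
def tn (b : Bool) : ℕ := cond b 1 0
def popSt (s : St) : ℕ := tn s.1 + tn s.2.1 + tn s.2.2
def getB (s : St) (i : Fin 3) : Bool := match i with | 0 => s.1 | 1 => s.2.1 | 2 => s.2.2
def setB (s : St) (i : Fin 3) : St := match i with
  | 0 => (true, s.2.1, s.2.2) | 1 => (s.1, true, s.2.2) | 2 => (s.1, s.2.1, true)
def hq : St → ℤ
  | (false,false,false) => -3 | (true,false,false) => 0 | (false,true,false) => 0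
  | (true,true,false) => 4 | (false,false,true) => 0 | (true,false,true) => 4
  | (false,true,true) => 4 | (true,true,true) => 10
def h0q : St → ℤ
  | (false,false,false) => -1 | (true,false,true) => 6 | (true,true,true) => 10 | _ => 0
def hRq : St → ℤ
  | (false,false,false) => -2 | (true,false,true) => 6 | (true,true,true) => 8 | _ => 0
def enc (s : St) : ℕ := tn s.1 + 2 * tn s.2.1 + 4 * tn s.2.2
def g2 (s t : St) : ℤ :=
  [[0,0,0,0,0,1,0,0],
   [0,0,1,0,0,2,2,1],
   [0,1,0,0,1,2,0,1],
   [0,0,0,-1,2,1,1,0],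
   [0,0,1,2,0,2,0,1],
   [2,2,2,1,2,1,1,0],
   [0,2,0,1,0,1,-1,0],
   [0,0,0,-1,0,-1,-1,-2]].getD (enc s) [] |>.getD (enc t) 0

section
variable (m : ℕ)

def memB (S : Finset (Fin 3 × Fin m)) (i : Fin 3) (j : ℕ) : Bool :=
  if h : j < m then decide ((i, ⟨j, h⟩) ∈ S) else false

def stS (S : Finset (Fin 3 × Fin m)) (j : ℕ) : St :=
  (memB m S 0 j, memB m S 1 j, memB m S 2 j)

def Phi (S : Finset (Fin 3 × Fin m)) : ℤ :=
  h0q (stS m S 0) + hRq (stS m S (m-1))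
    + (∑ j ∈ Finset.Ico 1 (m-1), hq (stS m S j))
    + 2 * ∑ j ∈ Finset.range (m-1), g2 (stS m S j) (stS m S (j+1))

variable {m}

lemma memB_true_of_mem {S : Finset (Fin 3 × Fin m)} {i : Fin 3} {j : ℕ} (h : j < m)
    (hmem : (i, (⟨j, h⟩ : Fin m)) ∈ S) : memB m S i j = true := by
  simp [memB, h, hmem]

lemma memB_of_ge {S : Finset (Fin 3 × Fin m)} {i : Fin 3} {j : ℕ} (h : m ≤ j) :
    memB m S i j = false := by
  simp [memB, Nat.not_lt.2 h]

lemma getB_stS {S : Finset (Fin 3 × Fin m)} {j : ℕ} {i : Fin 3} :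
    getB (stS m S j) i = memB m S i j := by
  fin_cases i <;> rfl

lemma memB_insert {S : Finset (Fin 3 × Fin m)} {v : Fin 3 × Fin m} {i : Fin 3} {j : ℕ} :
    memB m (insert v S) i j = (memB m S i j || (decide (i = v.1) && decide (j = v.2.val))) := by
  by_cases h : j < m
  · have key : ((i, (⟨j, h⟩ : Fin m)) = v) ↔ (i = v.1 ∧ j = v.2.val) := by
      rcases v with ⟨vi, vj⟩; simp [Prod.ext_iff, Fin.ext_iff]
    simp only [memB, dif_pos h, Finset.mem_insert, key]
    simp [Bool.or_comm, Bool.decide_and]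
  · have h2 : j ≠ v.2.val := fun hj => h (hj ▸ v.2.isLt)
    simp [memB, h, h2]

lemma stS_insert {S : Finset (Fin 3 × Fin m)} {v : Fin 3 × Fin m} {j : ℕ} :
    stS m (insert v S) j = if j = v.2.val then setB (stS m S j) v.1 else stS m S j := by
  by_cases hj : j = v.2.val
  · rw [if_pos hj]
    have hb : ∀ i : Fin 3, memB m (insert v S) i j = (memB m S i j || decide (i = v.1)) := by
      intro i; rw [memB_insert]; simp [hj]
    rcases v with ⟨i, jv⟩
    fin_cases i <;>
      simp only [stS, hb, setB] <;>
      simp [Bool.or_comm]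
  · rw [if_neg hj]
    simp only [stS, memB_insert]
    simp [hj]

end
end BP

namespace BP
section
variable {m : ℕ}

/-- bit of the row above row `i` (false if none) -/
def upB (s : St) (i : Fin 3) : Bool := match i with | 0 => false | 1 => s.1 | 2 => s.2.1
/-- bit of the row below row `i` (false if none) -/
def dnB (s : St) (i : Fin 3) : Bool := match i with | 0 => s.2.1 | 1 => s.2.2 | 2 => false

lemma grid_adj {u v : Fin 3 × Fin m} :
    (gridGraph 3 m).Adj u v ↔
      (u.2 = v.2 ∧ (u.1.val + 1 = v.1.val ∨ v.1.val + 1 = u.1.val)) ∨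
      (u.1 = v.1 ∧ (u.2.val + 1 = v.2.val ∨ v.2.val + 1 = u.2.val)) := by
  rw [gridGraph, SimpleGraph.boxProd_adj, SimpleGraph.pathGraph_adj, SimpleGraph.pathGraph_adj]
  tauto

lemma upB_true {S : Finset (Fin 3 × Fin m)} {j : ℕ} {i : Fin 3} (hj : j < m) (h1 : 1 ≤ i.val)
    (hi : i.val - 1 < 3)
    (hmem : ((⟨i.val - 1, hi⟩ : Fin 3), (⟨j, hj⟩ : Fin m)) ∈ S) :
    upB (stS m S j) i = true := by
  fin_cases i
  · simp at h1
  · exact memB_true_of_mem hj hmem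
  · exact memB_true_of_mem hj hmem

lemma dnB_true {S : Finset (Fin 3 × Fin m)} {j : ℕ} {i : Fin 3} (hj : j < m) (h1 : i.val ≤ 1)
    (hi : i.val + 1 < 3)
    (hmem : ((⟨i.val + 1, hi⟩ : Fin 3), (⟨j, hj⟩ : Fin m)) ∈ S) :
    dnB (stS m S j) i = true := by
  fin_cases i
  · exact memB_true_of_mem hj hmem
  · exact memB_true_of_mem hj hmem
  · simp at h1

/-- a singleton if `b`, else empty -/
def Fd {α : Type*} (b : Bool) (w : α) : Finset α := if b then {w} else ∅

lemma card_Fd {α : Type*} (b : Bool) (w : α) : (Fd b w).card = tn b := by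
  cases b <;> simp [Fd, tn]

lemma mem_Fd {α : Type*} {u w : α} {b : Bool} (hb : b = true) (hu : u = w) : u ∈ Fd b w := by
  subst hb hu; simp [Fd]

lemma count_nbrs {S : Finset (Fin 3 × Fin m)} {v : Fin 3 × Fin m} (hm : 0 < m)
    (T : Finset (Fin 3 × Fin m))
    (hT : 3 ≤ T.card) (hadj : ∀ u ∈ T, (gridGraph 3 m).Adj u v) (hTS : ∀ u ∈ T, u ∈ S) :
    3 ≤ tn (decide (1 ≤ v.2.val) && memB m S v.1 (v.2.val - 1))
        + tn (memB m S v.1 (v.2.val + 1))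
        + tn (upB (stS m S v.2.val) v.1) + tn (dnB (stS m S v.2.val) v.1) := by
  classical
  have hjm1 : v.2.val - 1 < m := by have := v.2.isLt; omega
  have hjm2 : (v.2.val + 1) % m < m := Nat.mod_lt _ hm
  have him1 : v.1.val - 1 < 3 := by have := v.1.isLt; omega
  have him2 : (v.1.val + 1) % 3 < 3 := Nat.mod_lt _ (by omega)
  have hsub : T ⊆
      Fd (decide (1 ≤ v.2.val) && memB m S v.1 (v.2.val - 1)) (v.1, ⟨v.2.val - 1, hjm1⟩)
      ∪ Fd (memB m S v.1 (v.2.val + 1)) (v.1, ⟨(v.2.val + 1) % m, hjm2⟩)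
      ∪ Fd (upB (stS m S v.2.val) v.1) (⟨v.1.val - 1, him1⟩, v.2)
      ∪ Fd (dnB (stS m S v.2.val) v.1) (⟨(v.1.val + 1) % 3, him2⟩, v.2) := by
    intro u hu
    have hA := grid_adj.mp (hadj u hu)
    have hS := hTS u hu
    have hv2m := v.2.isLt
    have hv1m := v.1.isLt
    have hu2m := u.2.isLt
    have hu1m := u.1.isLt
    simp only [Finset.mem_union]
    rcases hA with ⟨he, hd | hd⟩ | ⟨he, hd | hd⟩
    · -- up: u is the row above v
      refine Or.inl (Or.inr (mem_Fd ?_ ?_))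
      · refine upB_true v.2.isLt (by omega) him1 ?_
        have : u = ((⟨v.1.val - 1, him1⟩ : Fin 3), v.2) :=
          Prod.ext (Fin.ext (show u.1.val = v.1.val - 1 by omega)) he
        exact this ▸ hS
      · exact Prod.ext (Fin.ext (show u.1.val = v.1.val - 1 by omega)) he
    · -- down
      refine Or.inr (mem_Fd ?_ ?_)
      · refine dnB_true v.2.isLt (by omega) (by omega) ?_
        have : u = ((⟨v.1.val + 1, by omega⟩ : Fin 3), v.2) :=
          Prod.ext (Fin.ext (show u.1.val = v.1.val + 1 by omega)) he
        exact this ▸ hS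
      · exact Prod.ext (Fin.ext (show u.1.val = (v.1.val + 1) % 3 by omega)) he
    · -- left
      refine Or.inl (Or.inl (Or.inl (mem_Fd ?_ ?_)))
      · rw [Bool.and_eq_true, decide_eq_true_eq]
        refine ⟨by omega, memB_true_of_mem hjm1 ?_⟩
        have : u = (v.1, (⟨v.2.val - 1, hjm1⟩ : Fin m)) :=
          Prod.ext he (Fin.ext (show u.2.val = v.2.val - 1 by omega))
        exact this ▸ hS
      · exact Prod.ext he (Fin.ext (show u.2.val = v.2.val - 1 by omega))
    · -- right
      refine Or.inl (Or.inl (Or.inr (mem_Fd ?_ ?_)))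
      · refine memB_true_of_mem (show v.2.val + 1 < m by omega) ?_
        have : u = (v.1, (⟨v.2.val + 1, by omega⟩ : Fin m)) :=
          Prod.ext he (Fin.ext (show u.2.val = v.2.val + 1 by omega))
        exact this ▸ hS
      · refine Prod.ext he (Fin.ext ?_)
        show u.2.val = (v.2.val + 1) % m
        rw [hd, Nat.mod_eq_of_lt hu2m]
  have hcard := Finset.card_le_card hsub
  have h2 := Finset.card_union_le
    (Fd (decide (1 ≤ v.2.val) && memB m S v.1 (v.2.val - 1)) (((v.1, ⟨v.2.val - 1, hjm1⟩)) : Fin 3 × Fin m)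
      ∪ Fd (memB m S v.1 (v.2.val + 1)) (((v.1, ⟨(v.2.val + 1) % m, hjm2⟩)) : Fin 3 × Fin m)
      ∪ Fd (upB (stS m S v.2.val) v.1) (((⟨v.1.val - 1, him1⟩, v.2)) : Fin 3 × Fin m))
    (Fd (dnB (stS m S v.2.val) v.1) (((⟨(v.1.val + 1) % 3, him2⟩, v.2)) : Fin 3 × Fin m))
  have h3 := Finset.card_union_le
    (Fd (decide (1 ≤ v.2.val) && memB m S v.1 (v.2.val - 1)) (((v.1, ⟨v.2.val - 1, hjm1⟩)) : Fin 3 × Fin m)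
      ∪ Fd (memB m S v.1 (v.2.val + 1)) (((v.1, ⟨(v.2.val + 1) % m, hjm2⟩)) : Fin 3 × Fin m))
    (Fd (upB (stS m S v.2.val) v.1) (((⟨v.1.val - 1, him1⟩, v.2)) : Fin 3 × Fin m))
  have h4 := Finset.card_union_le
    (Fd (decide (1 ≤ v.2.val) && memB m S v.1 (v.2.val - 1)) (((v.1, ⟨v.2.val - 1, hjm1⟩)) : Fin 3 × Fin m))
    (Fd (memB m S v.1 (v.2.val + 1)) (((v.1, ⟨(v.2.val + 1) % m, hjm2⟩)) : Fin 3 × Fin m))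
  simp only [card_Fd] at h2 h3 h4
  omega

end
end BP

namespace BP

def cntM (a b c : St) (i : Fin 3) : ℕ :=
  tn (getB a i) + tn (getB c i) + tn (upB b i) + tn (dnB b i)
def cnt0 (b c : St) (i : Fin 3) : ℕ := tn (getB c i) + tn (upB b i) + tn (dnB b i)
def cntL (a b : St) (i : Fin 3) : ℕ := tn (getB a i) + tn (upB b i) + tn (dnB b i)

theorem Vmid : ∀ (a b c : St) (i : Fin 3), getB b i = false → 3 ≤ cntM a b c i →
    hq (setB b i) + 2 * g2 a (setB b i) + 2 * g2 (setB b i) c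
      ≤ hq b + 2 * g2 a b + 2 * g2 b c := by decide

theorem V0 : ∀ (b c : St) (i : Fin 3), getB b i = false → 3 ≤ cnt0 b c i →
    h0q (setB b i) + 2 * g2 (setB b i) c ≤ h0q b + 2 * g2 b c := by decide

theorem Vlast : ∀ (a b : St) (i : Fin 3), getB b i = false → 3 ≤ cntL a b i →
    hRq (setB b i) + 2 * g2 a (setB b i) ≤ hRq b + 2 * g2 a b := by decide

theorem P2M : ∀ (a b c : St), hq b + g2 b c + g2 a b ≤ 4 * popSt b := by decide
theorem P20 : ∀ (b c : St), h0q b + g2 b c ≤ 4 * popSt b := by decide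
theorem P2L : ∀ (a b : St), hRq b + g2 a b ≤ 4 * popSt b := by decide

section
variable {m : ℕ}

lemma sum_sub_except1 {s : Finset ℕ} {f g : ℕ → ℤ} {p : ℕ} (hp : p ∈ s)
    (h : ∀ j ∈ s, j ≠ p → f j = g j) :
    ∑ j ∈ s, f j = (∑ j ∈ s, g j) + (f p - g p) := by
  rw [← Finset.sum_erase_add s f hp, ← Finset.sum_erase_add s g hp]
  have : ∑ j ∈ s.erase p, f j = ∑ j ∈ s.erase p, g j :=
    Finset.sum_congr rfl fun j hj =>
      h j (Finset.mem_of_mem_erase hj) (Finset.ne_of_mem_erase hj)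
  rw [this]; ring

lemma sum_sub_except2 {s : Finset ℕ} {f g : ℕ → ℤ} {p q : ℕ} (hp : p ∈ s) (hq : q ∈ s)
    (hpq : p ≠ q) (h : ∀ j ∈ s, j ≠ p → j ≠ q → f j = g j) :
    ∑ j ∈ s, f j = (∑ j ∈ s, g j) + (f p - g p) + (f q - g q) := by
  have hq' : q ∈ s.erase p := Finset.mem_erase.2 ⟨fun he => hpq he.symm, hq⟩
  rw [← Finset.sum_erase_add s f hp, ← Finset.sum_erase_add s g hp,
    ← Finset.sum_erase_add _ f hq', ← Finset.sum_erase_add _ g hq']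
  have : ∑ j ∈ (s.erase p).erase q, f j = ∑ j ∈ (s.erase p).erase q, g j :=
    Finset.sum_congr rfl fun j hj =>
      h j (Finset.mem_of_mem_erase (Finset.mem_of_mem_erase hj))
        (Finset.ne_of_mem_erase (Finset.mem_of_mem_erase hj)) (Finset.ne_of_mem_erase hj)
  rw [this]; ring

theorem Phi_insert_le (hm : 3 ≤ m) {S : Finset (Fin 3 × Fin m)} {v : Fin 3 × Fin m}
    (hv : v ∉ S) {T : Finset (Fin 3 × Fin m)} (hT : 3 ≤ T.card)
    (hadj : ∀ u ∈ T, (gridGraph 3 m).Adj u v) (hTS : ∀ u ∈ T, u ∈ S) :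
    Phi m (insert v S) ≤ Phi m S := by
  classical
  have hj0 : v.2.val < m := v.2.isLt
  have key : ∀ j : ℕ, j ≠ v.2.val → stS m (insert v S) j = stS m S j := by
    intro j hj; rw [stS_insert, if_neg hj]
  have keyj : stS m (insert v S) v.2.val = setB (stS m S v.2.val) v.1 := by
    rw [stS_insert, if_pos rfl]
  have hgb : getB (stS m S v.2.val) v.1 = false := by
    rw [getB_stS]
    have hveq : ((v.1, (⟨v.2.val, hj0⟩ : Fin m)) : Fin 3 × Fin m) = v := rfl
    simp [memB, hj0, hveq, hv]
  have hcnt := count_nbrs (by omega) T hT hadj hTS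
  by_cases h0 : v.2.val = 0
  · -- left boundary column
    rw [h0] at hcnt keyj hgb
    have hcnt' : 3 ≤ cnt0 (stS m S 0) (stS m S 1) v.1 := by
      simp only [show decide (1 ≤ (0:ℕ)) = false from rfl, Bool.false_and] at hcnt
      simp only [← getB_stS] at hcnt
      simpa [cnt0, tn] using hcnt
    have hloc := V0 (stS m S 0) (stS m S 1) v.1 hgb hcnt'
    have e1 : stS m (insert v S) (m-1) = stS m S (m-1) := key _ (by omega)
    have e2 : ∑ j ∈ Finset.Ico 1 (m-1), hq (stS m (insert v S) j)
        = ∑ j ∈ Finset.Ico 1 (m-1), hq (stS m S j) :=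
      Finset.sum_congr rfl fun j hj => by
        rw [key j (by have := Finset.mem_Ico.1 hj; omega)]
    have e3 : ∑ j ∈ Finset.range (m-1), g2 (stS m (insert v S) j) (stS m (insert v S) (j+1))
        = (∑ j ∈ Finset.range (m-1), g2 (stS m S j) (stS m S (j+1)))
          + (g2 (setB (stS m S 0) v.1) (stS m S 1) - g2 (stS m S 0) (stS m S 1)) := by
      have := sum_sub_except1 (s := Finset.range (m-1))
        (f := fun j => g2 (stS m (insert v S) j) (stS m (insert v S) (j+1)))
        (g := fun j => g2 (stS m S j) (stS m S (j+1)))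
        (p := 0) (Finset.mem_range.2 (by omega))
        (fun j _ hj => by rw [key j (by omega), key (j+1) (by omega)])
      simpa [keyj, key 1 (by omega)] using this
    rw [Phi, Phi, keyj, e1, e2, e3]
    linarith
  · by_cases hlast : v.2.val = m - 1
    · -- right boundary column
      rw [hlast] at hcnt keyj hgb
      have hcnt' : 3 ≤ cntL (stS m S (m-2)) (stS m S (m-1)) v.1 := by
        simp only [show (1:ℕ) ≤ m - 1 from by omega, decide_eq_true_eq, Bool.true_and,
          show m - 1 + 1 = m from by omega, memB_of_ge (le_refl m),
          show m - 1 - 1 = m - 2 from by omega] at hcnt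
        · simp only [← getB_stS] at hcnt
          simpa [cntL, tn] using hcnt
      have hloc := Vlast (stS m S (m-2)) (stS m S (m-1)) v.1 hgb hcnt'
      have e1 : stS m (insert v S) 0 = stS m S 0 := key _ (by omega)
      have e2 : ∑ j ∈ Finset.Ico 1 (m-1), hq (stS m (insert v S) j)
          = ∑ j ∈ Finset.Ico 1 (m-1), hq (stS m S j) :=
        Finset.sum_congr rfl fun j hj => by
          rw [key j (by have := Finset.mem_Ico.1 hj; omega)]
      have e3 : ∑ j ∈ Finset.range (m-1), g2 (stS m (insert v S) j) (stS m (insert v S) (j+1))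
          = (∑ j ∈ Finset.range (m-1), g2 (stS m S j) (stS m S (j+1)))
            + (g2 (stS m S (m-2)) (setB (stS m S (m-1)) v.1)
                - g2 (stS m S (m-2)) (stS m S (m-1))) := by
        have := sum_sub_except1 (s := Finset.range (m-1))
          (f := fun j => g2 (stS m (insert v S) j) (stS m (insert v S) (j+1)))
          (g := fun j => g2 (stS m S j) (stS m S (j+1)))
          (p := m-2) (Finset.mem_range.2 (by omega))
          (fun j hj hjp => by
            rw [key j (by have := Finset.mem_range.1 hj; omega),
              key (j+1) (by have := Finset.mem_range.1 hj; omega)])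
        rw [show m - 2 + 1 = m - 1 from by omega] at this
        simpa [keyj, key (m-2) (by omega)] using this
      rw [Phi, Phi, keyj, e1, e2, e3]
      linarith
    · -- interior column
      have h1le : 1 ≤ v.2.val := by omega
      have hcnt' : 3 ≤ cntM (stS m S (v.2.val - 1)) (stS m S v.2.val)
          (stS m S (v.2.val + 1)) v.1 := by
        simp only [h1le, decide_eq_true_eq, Bool.true_and] at hcnt
        · simp only [← getB_stS] at hcnt
          simpa [cntM, tn] using hcnt
      have hloc := Vmid (stS m S (v.2.val - 1)) (stS m S v.2.val) (stS m S (v.2.val + 1))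
        v.1 hgb hcnt'
      have e0 : stS m (insert v S) 0 = stS m S 0 := key _ (by omega)
      have e1 : stS m (insert v S) (m-1) = stS m S (m-1) := key _ (by omega)
      have e2 : ∑ j ∈ Finset.Ico 1 (m-1), hq (stS m (insert v S) j)
          = (∑ j ∈ Finset.Ico 1 (m-1), hq (stS m S j))
            + (hq (setB (stS m S v.2.val) v.1) - hq (stS m S v.2.val)) := by
        have := sum_sub_except1 (s := Finset.Ico 1 (m-1))
          (f := fun j => hq (stS m (insert v S) j))
          (g := fun j => hq (stS m S j))
          (p := v.2.val) (Finset.mem_Ico.2 (by omega))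
          (fun j _ hj => by rw [key j hj])
        simpa [keyj] using this
      have e3 : ∑ j ∈ Finset.range (m-1), g2 (stS m (insert v S) j) (stS m (insert v S) (j+1))
          = (∑ j ∈ Finset.range (m-1), g2 (stS m S j) (stS m S (j+1)))
            + (g2 (stS m S (v.2.val - 1)) (setB (stS m S v.2.val) v.1)
                - g2 (stS m S (v.2.val - 1)) (stS m S v.2.val))
            + (g2 (setB (stS m S v.2.val) v.1) (stS m S (v.2.val + 1))
                - g2 (stS m S v.2.val) (stS m S (v.2.val + 1))) := by
        have := sum_sub_except2 (s := Finset.range (m-1))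
          (f := fun j => g2 (stS m (insert v S) j) (stS m (insert v S) (j+1)))
          (g := fun j => g2 (stS m S j) (stS m S (j+1)))
          (p := v.2.val - 1) (q := v.2.val)
          (Finset.mem_range.2 (by omega)) (Finset.mem_range.2 (by omega)) (by omega)
          (fun j _ hjp hjq => by rw [key j hjq, key (j+1) (by omega)])
        rw [show v.2.val - 1 + 1 = v.2.val from by omega] at this
        simpa [keyj, key (v.2.val - 1) (by omega), key (v.2.val + 1) (by omega)] using this
      rw [Phi, Phi, e0, e1, e2, e3]
      linarith

end
end BP

namespace BP
section
variable {m : ℕ}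

lemma tn_memB {S : Finset (Fin 3 × Fin m)} (i : Fin 3) (j : Fin m) :
    tn (memB m S i j.val) = if (i, j) ∈ S then 1 else 0 := by
  have : memB m S i j.val = decide ((i, j) ∈ S) := by
    rw [memB, dif_pos j.isLt]
  rw [this]
  by_cases h : (i, j) ∈ S <;> simp [h, tn]

lemma card_eq_sum_pop (S : Finset (Fin 3 × Fin m)) :
    S.card = ∑ j ∈ Finset.range m, popSt (stS m S j) := by
  classical
  have h1 : S.card = ∑ v : Fin 3 × Fin m, if v ∈ S then 1 else 0 := by
    rw [Finset.sum_ite_mem, Finset.univ_inter, Finset.card_eq_sum_ones]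
  rw [h1, Fintype.sum_prod_type]
  rw [Finset.sum_comm]
  have h2 : ∀ j : Fin m, (∑ i : Fin 3, if (i, j) ∈ S then 1 else 0) = popSt (stS m S j.val) := by
    intro j
    rw [Fin.sum_univ_three]
    rw [← tn_memB 0 j, ← tn_memB 1 j, ← tn_memB 2 j]
    rfl
  rw [Finset.sum_congr rfl (fun j _ => h2 j)]
  exact Fin.sum_univ_eq_sum_range (fun j => popSt (stS m S j)) m

theorem Phi_le_card (hm : 3 ≤ m) (S : Finset (Fin 3 × Fin m)) :
    Phi m S ≤ 4 * (S.card : ℤ) := by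
  obtain ⟨k, rfl⟩ : ∃ k, m = k + 3 := ⟨m - 3, by omega⟩
  have hc : (S.card : ℤ) = (popSt (stS (k+3) S 0) : ℤ)
      + (∑ j ∈ Finset.range (k+1), (popSt (stS (k+3) S (j+1)) : ℤ))
      + (popSt (stS (k+3) S (k+2)) : ℤ) := by
    have hA := Finset.sum_range_succ (fun j => (popSt (stS (k+3) S j) : ℤ)) (k+2)
    have hB := Finset.sum_range_succ' (fun j => (popSt (stS (k+3) S j) : ℤ)) (k+1)
    have h0 : (S.card : ℤ) = ∑ j ∈ Finset.range ((k+2)+1), (popSt (stS (k+3) S j) : ℤ) := by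
      rw [card_eq_sum_pop S]
      push_cast
      rfl
    rw [h0, hA, hB]
    ring
  have e1 : ∑ j ∈ Finset.Ico 1 (k+2), hq (stS (k+3) S j)
      = ∑ j ∈ Finset.range (k+1), hq (stS (k+3) S (j+1)) := by
    rw [Finset.sum_Ico_eq_sum_range]
    exact Finset.sum_congr (by norm_num) (fun j _ => by rw [Nat.add_comm 1 j])
  have e2 : ∑ j ∈ Finset.range (k+2), g2 (stS (k+3) S j) (stS (k+3) S (j+1))
      = (∑ j ∈ Finset.range (k+1), g2 (stS (k+3) S (j+1)) (stS (k+3) S (j+2)))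
        + g2 (stS (k+3) S 0) (stS (k+3) S 1) :=
    Finset.sum_range_succ' (fun j => g2 (stS (k+3) S j) (stS (k+3) S (j+1))) (k+1)
  have e3 : ∑ j ∈ Finset.range (k+2), g2 (stS (k+3) S j) (stS (k+3) S (j+1))
      = (∑ j ∈ Finset.range (k+1), g2 (stS (k+3) S j) (stS (k+3) S (j+1)))
        + g2 (stS (k+3) S (k+1)) (stS (k+3) S (k+2)) :=
    Finset.sum_range_succ (fun j => g2 (stS (k+3) S j) (stS (k+3) S (j+1))) (k+1)
  have hsum : ∑ j ∈ Finset.range (k+1),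
        (hq (stS (k+3) S (j+1)) + g2 (stS (k+3) S (j+1)) (stS (k+3) S (j+2))
          + g2 (stS (k+3) S j) (stS (k+3) S (j+1)))
      ≤ ∑ j ∈ Finset.range (k+1), (4 : ℤ) * (popSt (stS (k+3) S (j+1)) : ℤ) :=
    Finset.sum_le_sum (fun j _ => P2M (stS (k+3) S j) (stS (k+3) S (j+1)) (stS (k+3) S (j+2)))
  have i0 : h0q (stS (k+3) S 0) + g2 (stS (k+3) S 0) (stS (k+3) S 1)
      ≤ 4 * (popSt (stS (k+3) S 0) : ℤ) := P20 _ _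
  have iL : hRq (stS (k+3) S (k+2)) + g2 (stS (k+3) S (k+1)) (stS (k+3) S (k+2))
      ≤ 4 * (popSt (stS (k+3) S (k+2)) : ℤ) := P2L _ _
  have hdist : ∑ j ∈ Finset.range (k+1),
        (hq (stS (k+3) S (j+1)) + g2 (stS (k+3) S (j+1)) (stS (k+3) S (j+2))
          + g2 (stS (k+3) S j) (stS (k+3) S (j+1)))
      = (∑ j ∈ Finset.range (k+1), hq (stS (k+3) S (j+1)))
        + (∑ j ∈ Finset.range (k+1), g2 (stS (k+3) S (j+1)) (stS (k+3) S (j+2)))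
        + (∑ j ∈ Finset.range (k+1), g2 (stS (k+3) S j) (stS (k+3) S (j+1))) := by
    rw [Finset.sum_add_distrib, Finset.sum_add_distrib]
  have hmul : ∑ j ∈ Finset.range (k+1), (4 : ℤ) * (popSt (stS (k+3) S (j+1)) : ℤ)
      = 4 * ∑ j ∈ Finset.range (k+1), (popSt (stS (k+3) S (j+1)) : ℤ) := by
    rw [← Finset.mul_sum]
  rw [Phi, show k+3-1 = k+2 from rfl]
  rw [e1]
  have hthis := hsum
  rw [hdist, hmul] at hthis
  linarith [hthis, i0, iL, e2, e3, hc]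

lemma stS_univ {j : ℕ} (hj : j < m) :
    stS m (Finset.univ : Finset (Fin 3 × Fin m)) j = (true, true, true) := by
  simp [stS, memB, hj]

theorem Phi_univ (hm : 3 ≤ m) :
    Phi m (Finset.univ : Finset (Fin 3 × Fin m)) = 6 * (m : ℤ) + 2 := by
  obtain ⟨k, rfl⟩ : ∃ k, m = k + 3 := ⟨m - 3, by omega⟩
  rw [Phi, show k+3-1 = k+2 from rfl]
  rw [stS_univ (by omega), stS_univ (by omega)]
  have e1 : ∑ j ∈ Finset.Ico 1 (k+2), hq (stS (k+3) Finset.univ j)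
      = ∑ j ∈ Finset.Ico 1 (k+2), (10 : ℤ) :=
    Finset.sum_congr rfl (fun j hj => by
      rw [stS_univ (by have := Finset.mem_Ico.1 hj; omega)]; rfl)
  have e2 : ∑ j ∈ Finset.range (k+2),
        g2 (stS (k+3) Finset.univ j) (stS (k+3) Finset.univ (j+1))
      = ∑ j ∈ Finset.range (k+2), (-2 : ℤ) :=
    Finset.sum_congr rfl (fun j hj => by
      rw [stS_univ (by have := Finset.mem_range.1 hj; omega),
        stS_univ (by have := Finset.mem_range.1 hj; omega)]; rfl)
  rw [e1, e2, Finset.sum_const, Finset.sum_const, Nat.card_Ico, Finset.card_range]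
  show (10 : ℤ) + 8 + (k + 2 - 1) • (10:ℤ) + 2 * ((k+2) • (-2 : ℤ)) = 6 * ((k:ℤ) + 3) + 2
  rw [show k + 2 - 1 = k + 1 from rfl]
  simp only [nsmul_eq_mul]
  push_cast
  ring

end
end BP

namespace BP

theorem lower_bound {m : ℕ} (hm : 3 ≤ m) (A : Finset (Fin 3 × Fin m))
    (hperc : Percolates (gridGraph 3 m) 3 (↑A)) :
    6 * (m : ℤ) + 2 ≤ 4 * (A.card : ℤ) := by
  classical
  set P : Finset (Fin 3 × Fin m) → Prop := fun S =>
    A ⊆ S ∧ Phi m S ≤ Phi m A ∧ ∀ v ∈ S, Infected (gridGraph 3 m) 3 (↑A) v with hP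
  have hPA : P A := ⟨subset_rfl, le_rfl, fun v hv => Infected.init (Finset.mem_coe.2 hv)⟩
  obtain ⟨S, hSmem, hSmax⟩ := Finset.exists_max_image
    (Finset.univ.filter P) (fun S => S.card) ⟨A, Finset.mem_filter.2 ⟨Finset.mem_univ _, hPA⟩⟩
  have hSP : P S := (Finset.mem_filter.1 hSmem).2
  have hSuniv : S = Finset.univ := by
    by_cases hcl : ∀ (v : Fin 3 × Fin m) (T : Finset (Fin 3 × Fin m)), 3 ≤ T.card →
        (∀ u ∈ T, (gridGraph 3 m).Adj u v) → (∀ u ∈ T, u ∈ S) → v ∈ S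
    · apply Finset.eq_univ_of_forall
      intro v
      have hv := hperc v
      induction hv with
      | init h => exact hSP.1 (Finset.mem_coe.1 h)
      | step T hTcard hTadj _ ih => exact hcl _ T hTcard hTadj ih
    · push_neg at hcl
      obtain ⟨v, T, hT3, hadj, hTS, hvS⟩ := hcl
      have hP' : P (insert v S) := by
        refine ⟨hSP.1.trans (Finset.subset_insert _ _),
          (Phi_insert_le hm hvS hT3 hadj hTS).trans hSP.2.1, ?_⟩
        intro u hu
        rcases Finset.mem_insert.1 hu with rfl | hu'
        · exact Infected.step T hT3 hadj (fun w hw => hSP.2.2 w (hTS w hw))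
        · exact hSP.2.2 u hu'
      have hle := hSmax (insert v S) (Finset.mem_filter.2 ⟨Finset.mem_univ _, hP'⟩)
      rw [Finset.card_insert_of_notMem hvS] at hle
      omega
  have h1 : Phi m (Finset.univ : Finset (Fin 3 × Fin m)) ≤ Phi m A := hSuniv ▸ hSP.2.1
  rw [Phi_univ hm] at h1
  exact h1.trans (Phi_le_card hm A)

end BP

namespace BP

def seed (m : ℕ) : Finset (Fin 3 × Fin m) :=
  Finset.univ.filter (fun v => (v.1 = (1 : Fin 3)) ↔ (v.2.val % 2 = 1))

lemma sum_mod2 (n : ℕ) : ∑ j ∈ Finset.range n, (if j % 2 = 1 then (1:ℕ) else 0) = n / 2 := by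
  induction n with
  | zero => simp
  | succ n ih =>
    rw [Finset.sum_range_succ, ih]
    by_cases h : n % 2 = 1
    · rw [if_pos h]; omega
    · rw [if_neg h]; omega

lemma sum_not_mod2 (n : ℕ) :
    ∑ j ∈ Finset.range n, (if ¬ (j % 2 = 1) then (1:ℕ) else 0) = n - n / 2 := by
  induction n with
  | zero => simp
  | succ n ih =>
    rw [Finset.sum_range_succ, ih]
    by_cases h : n % 2 = 1
    · rw [if_neg (by simpa using h)]; omega
    · rw [if_pos (by simpa using h)]; omega

lemma seed_card {m : ℕ} (hodd : m % 2 = 1) : (seed m).card = (3 * m + 1) / 2 := by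
  classical
  rw [seed, Finset.card_filter, Fintype.sum_prod_type, Fin.sum_univ_three]
  dsimp only
  have k0 : (∑ j : Fin m, if (((0:Fin 3) = 1) ↔ (j.val % 2 = 1)) then (1:ℕ) else 0)
      = m - m / 2 := by
    have h1 : ∀ j : Fin m, (if (((0:Fin 3) = 1) ↔ (j.val % 2 = 1)) then (1:ℕ) else 0)
        = (if ¬ (j.val % 2 = 1) then (1:ℕ) else 0) :=
      fun j => if_congr
        ⟨fun h hh => absurd (h.2 hh) (by decide),
         fun h => ⟨fun hh => absurd hh (by decide), fun hh => absurd hh h⟩⟩ rfl rfl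
    rw [Finset.sum_congr rfl (fun j _ => h1 j),
      Fin.sum_univ_eq_sum_range (fun j => if ¬ (j % 2 = 1) then (1:ℕ) else 0) m,
      sum_not_mod2]
  have k1 : (∑ j : Fin m, if (((1:Fin 3) = 1) ↔ (j.val % 2 = 1)) then (1:ℕ) else 0)
      = m / 2 := by
    have h1 : ∀ j : Fin m, (if (((1:Fin 3) = 1) ↔ (j.val % 2 = 1)) then (1:ℕ) else 0)
        = (if (j.val % 2 = 1) then (1:ℕ) else 0) :=
      fun j => if_congr (by simp) rfl rfl
    rw [Finset.sum_congr rfl (fun j _ => h1 j),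
      Fin.sum_univ_eq_sum_range (fun j => if (j % 2 = 1) then (1:ℕ) else 0) m, sum_mod2]
  have k2 : (∑ j : Fin m, if (((2:Fin 3) = 1) ↔ (j.val % 2 = 1)) then (1:ℕ) else 0)
      = m - m / 2 := by
    have h1 : ∀ j : Fin m, (if (((2:Fin 3) = 1) ↔ (j.val % 2 = 1)) then (1:ℕ) else 0)
        = (if ¬ (j.val % 2 = 1) then (1:ℕ) else 0) :=
      fun j => if_congr
        ⟨fun h hh => absurd (h.2 hh) (by decide),
         fun h => ⟨fun hh => absurd hh (by decide), fun hh => absurd hh h⟩⟩ rfl rfl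
    rw [Finset.sum_congr rfl (fun j _ => h1 j),
      Fin.sum_univ_eq_sum_range (fun j => if ¬ (j % 2 = 1) then (1:ℕ) else 0) m,
      sum_not_mod2]
  rw [k0, k1, k2]
  omega

lemma seed_mem {m : ℕ} {w : Fin 3 × Fin m} (hw : (w.1 = (1 : Fin 3)) ↔ (w.2.val % 2 = 1)) :
    Infected (gridGraph 3 m) 3 (↑(seed m)) w :=
  Infected.init (Finset.mem_coe.2 (Finset.mem_filter.2 ⟨Finset.mem_univ _, hw⟩))

lemma pair_ne {m : ℕ} {a c : Fin 3} {b d : Fin m} (h : a.val ≠ c.val ∨ b.val ≠ d.val) :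
    (a, b) ≠ (c, d) := by
  intro he
  rcases h with h | h
  · exact h (congrArg Fin.val (congrArg Prod.fst he))
  · exact h (congrArg Fin.val (congrArg Prod.snd he))

theorem seed_percolates {m : ℕ} (hm : 3 ≤ m) (hodd : m % 2 = 1) :
    Percolates (gridGraph 3 m) 3 (↑(seed m)) := by
  classical
  intro v
  by_cases hv : (v.1 = (1 : Fin 3)) ↔ (v.2.val % 2 = 1)
  · exact seed_mem hv
  · have hvm := v.2.isLt
    by_cases h1 : v.1 = (1 : Fin 3)
    · -- middle row, even column
      have hv1val : v.1.val = 1 := by rw [h1]; rfl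
      have hje : v.2.val % 2 = 0 := by
        rcases Nat.mod_two_eq_zero_or_one v.2.val with h | h
        · exact h
        · exact absurd (iff_of_true h1 h) hv
      have hje' : ¬ (v.2.val % 2 = 1) := by omega
      have hnext : ∃ jn : Fin m, jn.val % 2 = 1 ∧ (gridGraph 3 m).Adj (v.1, jn) v := by
        by_cases hj0 : v.2.val + 1 < m
        · refine ⟨⟨v.2.val + 1, hj0⟩, show (v.2.val + 1) % 2 = 1 by omega, ?_⟩
          rw [grid_adj]
          exact Or.inr ⟨rfl, Or.inr rfl⟩
        · refine ⟨⟨v.2.val - 1, by omega⟩, show (v.2.val - 1) % 2 = 1 by omega, ?_⟩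
          rw [grid_adj]
          exact Or.inr ⟨rfl, Or.inl (show v.2.val - 1 + 1 = v.2.val by omega)⟩
      obtain ⟨jn, hjn, hjadj⟩ := hnext
      have hne1 : ((0:Fin 3), v.2) ≠ ((2:Fin 3), v.2) := pair_ne (Or.inl (show (0:Fin 3).val ≠ (2:Fin 3).val by decide))
      have hne2 : ((0:Fin 3), v.2) ≠ (v.1, jn) := pair_ne (Or.inr (show v.2.val ≠ jn.val by omega))
      have hne3 : ((2:Fin 3), v.2) ≠ (v.1, jn) := pair_ne (Or.inr (show v.2.val ≠ jn.val by omega))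
      refine Infected.step {((0 : Fin 3), v.2), ((2 : Fin 3), v.2), (v.1, jn)} ?_ ?_ ?_
      · rw [Finset.card_insert_of_notMem (by simp [hne1, hne2]),
          Finset.card_insert_of_notMem (by simp [hne3]), Finset.card_singleton]
      · intro u hu
        simp only [Finset.mem_insert, Finset.mem_singleton] at hu
        rcases hu with rfl | rfl | rfl
        · rw [grid_adj]
          exact Or.inl ⟨rfl, Or.inl (show (0:Fin 3).val + 1 = v.1.val by rw [hv1val]; rfl)⟩
        · rw [grid_adj]
          exact Or.inl ⟨rfl, Or.inr (show v.1.val + 1 = (2:Fin 3).val by rw [hv1val]; rfl)⟩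
        · exact hjadj
      · intro u hu
        simp only [Finset.mem_insert, Finset.mem_singleton] at hu
        rcases hu with rfl | rfl | rfl
        · exact seed_mem (iff_of_false (show ¬ ((0:Fin 3) = (1:Fin 3)) by decide) hje')
        · exact seed_mem (iff_of_false (show ¬ ((2:Fin 3) = (1:Fin 3)) by decide) hje')
        · exact seed_mem (iff_of_true h1 hjn)
    · -- top or bottom row, odd column
      have hv1val : v.1.val ≠ 1 := fun h => h1 (Fin.ext h)
      have hv1lt : v.1.val < 3 := v.1.isLt
      have hjo : v.2.val % 2 = 1 := by
        by_contra h
        exact hv (iff_of_false h1 h)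
      have hlt : v.2.val + 1 < m := by omega
      have hge : 1 ≤ v.2.val := by omega
      have hne1 : ((1:Fin 3), v.2) ≠ (v.1, (⟨v.2.val - 1, by omega⟩ : Fin m)) :=
        pair_ne (Or.inr (show v.2.val ≠ v.2.val - 1 by omega))
      have hne2 : ((1:Fin 3), v.2) ≠ (v.1, (⟨v.2.val + 1, hlt⟩ : Fin m)) :=
        pair_ne (Or.inr (show v.2.val ≠ v.2.val + 1 by omega))
      have hne3 : ((v.1, (⟨v.2.val - 1, by omega⟩ : Fin m)) : Fin 3 × Fin m)
          ≠ (v.1, (⟨v.2.val + 1, hlt⟩ : Fin m)) :=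
        pair_ne (Or.inr (show v.2.val - 1 ≠ v.2.val + 1 by omega))
      refine Infected.step
        {((1 : Fin 3), v.2), (v.1, (⟨v.2.val - 1, by omega⟩ : Fin m)),
          (v.1, (⟨v.2.val + 1, hlt⟩ : Fin m))} ?_ ?_ ?_
      · rw [Finset.card_insert_of_notMem (by simp [hne1, hne2]),
          Finset.card_insert_of_notMem (by simp [hne3]), Finset.card_singleton]
      · intro u hu
        simp only [Finset.mem_insert, Finset.mem_singleton] at hu
        rcases hu with rfl | rfl | rfl
        · rw [grid_adj]
          refine Or.inl ⟨rfl, ?_⟩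
          show (1:Fin 3).val + 1 = v.1.val ∨ v.1.val + 1 = (1:Fin 3).val
          have hone : (1:Fin 3).val = 1 := rfl
          omega
        · rw [grid_adj]
          exact Or.inr ⟨rfl, Or.inl (show v.2.val - 1 + 1 = v.2.val by omega)⟩
        · rw [grid_adj]; exact Or.inr ⟨rfl, Or.inr rfl⟩
      · intro u hu
        simp only [Finset.mem_insert, Finset.mem_singleton] at hu
        rcases hu with rfl | rfl | rfl
        · exact seed_mem (iff_of_true rfl hjo)
        · exact seed_mem (iff_of_false h1 (show ¬ ((v.2.val - 1) % 2 = 1) by omega))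
        · exact seed_mem (iff_of_false h1 (show ¬ ((v.2.val + 1) % 2 = 1) by omega))

end BP


theorem stmt_5 (m : ℕ) (hm : 3 ≤ m) (hodd : Odd m) :
    percNum (Fin 3 × Fin m) (gridGraph 3 m) 3 = 3 * (m + 1) / 2 - 1 := by
  have hm2 : m % 2 = 1 := Nat.odd_iff.mp hodd
  have hmem : (3 * m + 1) / 2 ∈ {k | ∃ A : Finset (Fin 3 × Fin m),
      A.card = (k : ℕ) ∧ Percolates (gridGraph 3 m) 3 (↑A)} :=
    ⟨BP.seed m, BP.seed_card hm2, BP.seed_percolates hm hm2⟩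
  have hub : percNum (Fin 3 × Fin m) (gridGraph 3 m) 3 ≤ (3 * m + 1) / 2 := Nat.sInf_le hmem
  have hlb : (3 * m + 1) / 2 ≤ percNum (Fin 3 × Fin m) (gridGraph 3 m) 3 := by
    refine le_csInf ⟨_, hmem⟩ ?_
    rintro k ⟨A, hA, hp⟩
    have h := BP.lower_bound hm A hp
    have h' : 6 * m + 2 ≤ 4 * A.card := by exact_mod_cast h
    omega
  have heq : percNum (Fin 3 × Fin m) (gridGraph 3 m) 3 = (3 * m + 1) / 2 :=
    le_antisymm hub hlb
  rw [heq]
  omega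
end

section
/- For m ≥ 5 odd, the 3-percolation number of the grid P₅ □ Pₘ equals 2m + 2. -/
open SimpleGraph Finset

section Lower

open scoped Classical

variable {V : Type*} [Fintype V] (G : SimpleGraph V)

/-- Finsets reachable from `A` by legal 3-infection steps. -/
inductive Reach (A : Finset V) : Finset V → Prop
  | base : Reach A A
  | step {S : Finset V} {v : V} : Reach A S → v ∉ S →
      3 ≤ (S.filter fun u => G.Adj u v).card → Reach A (insert v S)

/-- Doubled edge count inside `S`. -/
noncomputable def e2 (S : Finset V) : ℕ := ∑ v ∈ S, (S.filter fun u => G.Adj v u).card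

lemma e2_insert {S : Finset V} {v : V} (hv : v ∉ S) :
    e2 G (insert v S) = e2 G S + 2 * (S.filter fun u => G.Adj u v).card := by
  classical
  unfold e2
  rw [Finset.sum_insert hv]
  have h1 : ((insert v S).filter fun u => G.Adj v u).card
      = (S.filter fun u => G.Adj v u).card := by
    rw [Finset.filter_insert, if_neg (G.irrefl)]
  have h2 : ∀ u ∈ S, ((insert v S).filter fun w => G.Adj u w).card
      = (S.filter fun w => G.Adj u w).card + (if G.Adj u v then 1 else 0) := by
    intro u hu
    rw [Finset.filter_insert]
    split
    · rw [Finset.card_insert_of_notMem (fun h => hv (Finset.mem_of_mem_filter _ h))]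
    · rw [Nat.add_zero]
  rw [Finset.sum_congr rfl h2, Finset.sum_add_distrib, Finset.sum_boole]
  have h3 : (S.filter fun u => G.Adj v u).card = (S.filter fun u => G.Adj u v).card := by
    congr 1; apply Finset.filter_congr; intro u _; simp [G.adj_comm]
  push_cast
  omega

lemma reach_bound {A S : Finset V} (h : Reach G A S) :
    6 * S.card ≤ 6 * A.card + e2 G S := by
  induction h with
  | base => omega
  | step hR hv hcard ih =>
    rw [Finset.card_insert_of_notMem hv, e2_insert G hv]
    omega

lemma reach_subset {A S : Finset V} (h : Reach G A S) : A ⊆ S := by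
  induction h with
  | base => exact Finset.Subset.refl _
  | step hR hv hcard ih => exact ih.trans (Finset.subset_insert _ _)

lemma reach_univ {A : Finset V} (h : Percolates G 3 ↑A) : Reach G A Finset.univ := by
  classical
  obtain ⟨S, hS, hmax⟩ := Set.Finite.exists_maximalFor Finset.card
    {S | Reach G A S} (Set.toFinite _) ⟨A, Reach.base⟩
  have hall : ∀ v, v ∈ S := by
    intro v
    induction h v with
    | init hv => exact reach_subset G hS hv
    | step T hT hadj hinf ih =>
      rename_i w
      by_contra hw
      have hsub : T ⊆ S.filter fun u => G.Adj u w := by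
        intro u hu
        exact Finset.mem_filter.2 ⟨ih u hu, hadj u hu⟩
      have hR' : Reach G A (insert w S) :=
        Reach.step hS hw (hT.trans (Finset.card_le_card hsub))
      have := hmax hR' (by
        rw [Finset.card_insert_of_notMem hw]; omega)
      rw [Finset.card_insert_of_notMem hw] at this
      omega
  have : S = Finset.univ := Finset.eq_univ_iff_forall.2 hall
  rwa [this] at hS

end Lower

section Deg
open scoped Classical

lemma path_filter_eq (n : ℕ) (i : Fin n) :
    ((Finset.univ : Finset (Fin n)).filter fun k => (pathGraph n).Adj i k)
      = (if h : i.val + 1 < n then {(⟨i.val + 1, h⟩ : Fin n)} else ∅)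
        ∪ (if h : 0 < i.val then {(⟨i.val - 1, by omega⟩ : Fin n)} else ∅) := by
  have hi := i.isLt
  ext k
  have hk := k.isLt
  simp only [Finset.mem_filter, Finset.mem_univ, true_and, pathGraph_adj, Finset.mem_union]
  by_cases h1 : i.val + 1 < n <;> by_cases h2 : 0 < i.val <;>
    simp [h1, h2, Fin.ext_iff] <;> omega

lemma path_deg (n : ℕ) (i : Fin n) :
    ((Finset.univ : Finset (Fin n)).filter fun k => (pathGraph n).Adj i k).card
      = (if i.val + 1 < n then 1 else 0) + (if 0 < i.val then 1 else 0) := by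
  rw [path_filter_eq]
  by_cases h1 : i.val + 1 < n <;> by_cases h2 : 0 < i.val <;>
    simp [h1, h2, Finset.card_union_of_disjoint, Fin.ext_iff] <;>
    rw [Finset.card_pair (by simp [Fin.ext_iff]; omega)]

lemma path_deg_sum (n : ℕ) (hn : 1 ≤ n) :
    (∑ i : Fin n, ((Finset.univ : Finset (Fin n)).filter
      fun k => (pathGraph n).Adj i k).card) = 2 * (n - 1) := by
  have h0 : (0:ℕ) < n := hn
  calc (∑ i : Fin n, ((Finset.univ : Finset (Fin n)).filter
        fun k => (pathGraph n).Adj i k).card)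
      = ∑ i : Fin n, ((if (i:ℕ) + 1 < n then 1 else 0) + (if 0 < (i:ℕ) then 1 else 0)) := by
        exact Finset.sum_congr rfl fun i _ => path_deg n i
    _ = (Finset.univ.filter fun i : Fin n => (i:ℕ) + 1 < n).card
        + (Finset.univ.filter fun i : Fin n => 0 < (i:ℕ)).card := by
        rw [Finset.sum_add_distrib, Finset.sum_boole, Finset.sum_boole]; push_cast; ring
    _ = 2 * (n - 1) := by
        have e1 : (Finset.univ.filter fun i : Fin n => (i:ℕ) + 1 < n)
            = Finset.univ.erase ⟨n - 1, by omega⟩ := by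
          ext k; have := k.isLt
          simp [Fin.ext_iff]; omega
        have e2 : (Finset.univ.filter fun i : Fin n => 0 < (i:ℕ))
            = Finset.univ.erase ⟨0, h0⟩ := by
          ext k
          simp [Fin.ext_iff]; omega
        rw [e1, e2, Finset.card_erase_of_mem (Finset.mem_univ _),
          Finset.card_erase_of_mem (Finset.mem_univ _)]
        simp only [Finset.card_univ, Fintype.card_fin]
        omega
end Deg

section GridCount
open scoped Classical
lemma grid_filter_card (m : ℕ) (i : Fin 5) (j : Fin m) :
    ((Finset.univ : Finset (Fin 5 × Fin m)).filter fun u => (gridGraph 5 m).Adj (i, j) u).card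
      = ((Finset.univ : Finset (Fin 5)).filter fun a => (pathGraph 5).Adj i a).card
        + ((Finset.univ : Finset (Fin m)).filter fun b => (pathGraph m).Adj j b).card := by
  rw [Finset.card_filter, Fintype.sum_prod_type, Finset.card_filter, Finset.card_filter]
  have key : ∀ (a : Fin 5) (b : Fin m), (if (gridGraph 5 m).Adj (i, j) (a, b) then (1:ℕ) else 0)
      = (if (pathGraph 5).Adj i a ∧ j = b then 1 else 0)
        + (if (pathGraph m).Adj j b ∧ i = a then 1 else 0) := by
    intro a b
    by_cases h1 : (pathGraph 5).Adj i a ∧ j = b <;>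
      by_cases h2 : (pathGraph m).Adj j b ∧ i = a
    · exact absurd (h2.2 ▸ h1.1) (pathGraph 5).irrefl
    all_goals simp [gridGraph, boxProd_adj, h1, h2]
  calc (∑ a : Fin 5, ∑ b : Fin m, if (gridGraph 5 m).Adj (i, j) (a, b) then (1:ℕ) else 0)
      = ∑ a : Fin 5, ∑ b : Fin m, ((if (pathGraph 5).Adj i a ∧ j = b then (1:ℕ) else 0)
          + (if (pathGraph m).Adj j b ∧ i = a then 1 else 0)) := by
        exact Finset.sum_congr rfl fun a _ => Finset.sum_congr rfl fun b _ => key a b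
    _ = (∑ a : Fin 5, ∑ b : Fin m, if (pathGraph 5).Adj i a ∧ j = b then (1:ℕ) else 0)
        + ∑ a : Fin 5, ∑ b : Fin m, (if (pathGraph m).Adj j b ∧ i = a then (1:ℕ) else 0) := by
        rw [← Finset.sum_add_distrib]
        exact Finset.sum_congr rfl fun a _ => Finset.sum_add_distrib
    _ = _ := by
        congr 1
        · refine Finset.sum_congr rfl fun a _ => ?_
          by_cases h : (pathGraph 5).Adj i a <;> simp [h]
        · rw [Finset.sum_comm]
          have : ∀ b : Fin m, (∑ a : Fin 5, if (pathGraph m).Adj j b ∧ i = a then (1:ℕ) else 0)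
              = if (pathGraph m).Adj j b then 1 else 0 := by
            intro b
            by_cases h : (pathGraph m).Adj j b <;> simp [h]
          rw [Finset.sum_congr rfl fun b _ => this b]

lemma grid_e2 (m : ℕ) (hm : 1 ≤ m) :
    e2 (gridGraph 5 m) Finset.univ = 18 * m - 10 := by
  unfold e2
  rw [Fintype.sum_prod_type]
  have : ∀ (i : Fin 5) (j : Fin m),
      ((Finset.univ : Finset (Fin 5 × Fin m)).filter fun u => (gridGraph 5 m).Adj (i, j) u).card
      = ((Finset.univ : Finset (Fin 5)).filter fun a => (pathGraph 5).Adj i a).card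
        + ((Finset.univ : Finset (Fin m)).filter fun b => (pathGraph m).Adj j b).card :=
    grid_filter_card m
  rw [Finset.sum_congr rfl fun i _ => Finset.sum_congr rfl fun j _ => this i j]
  have h5 := path_deg_sum 5 (by norm_num)
  have hmm := path_deg_sum m hm
  simp only [Finset.sum_add_distrib, Finset.sum_const, Finset.card_univ, Fintype.card_fin,
    smul_eq_mul, h5, hmm]
  rw [← Finset.mul_sum, h5]
  omega


end GridCount

lemma pair_ne_fst {α β : Type*} {a c : α} {b d : β} (h : a ≠ c) : (a, b) ≠ (c, d) :=
  fun hcon => h (congrArg Prod.fst hcon)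

lemma pair_ne_snd {α β : Type*} {a c : α} {b d : β} (h : b ≠ d) : (a, b) ≠ (c, d) :=
  fun hcon => h (congrArg Prod.snd hcon)

lemma infect3 {V : Type*} [DecidableEq V] {G : SimpleGraph V} {A : Set V} {a b c v : V}
    (hab : a ≠ b) (hac : a ≠ c) (hbc : b ≠ c)
    (ha : G.Adj a v) (hb : G.Adj b v) (hc : G.Adj c v)
    (ia : Infected G 3 A a) (ib : Infected G 3 A b) (ic : Infected G 3 A c) :
    Infected G 3 A v := by
  refine Infected.step {a, b, c} ?_ ?_ ?_
  · rw [Finset.card_insert_of_notMem (by simp [hab, hac]),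
      Finset.card_insert_of_notMem (by simp [hbc]), Finset.card_singleton]
  · intro u hu
    simp only [Finset.mem_insert, Finset.mem_singleton] at hu
    rcases hu with rfl | rfl | rfl <;> assumption
  · intro u hu
    simp only [Finset.mem_insert, Finset.mem_singleton] at hu
    rcases hu with rfl | rfl | rfl <;> assumption

lemma grid_adj {n m : ℕ} {i i' : Fin n} {j j' : Fin m} :
    (gridGraph n m).Adj (i, j) (i', j') ↔
      (((i:ℕ) + 1 = i' ∨ (i':ℕ) + 1 = i) ∧ j = j')
        ∨ (((j:ℕ) + 1 = j' ∨ (j':ℕ) + 1 = j) ∧ i = i') := by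
  simp [gridGraph, boxProd_adj, pathGraph_adj]

lemma upper (m : ℕ) (hm : 5 ≤ m) (hodd : Odd m) :
    ∃ A : Finset (Fin 5 × Fin m), A.card = 2 * m + 2
      ∧ Percolates (gridGraph 5 m) 3 ↑A := by
  have hm2 : m % 2 = 1 := Nat.odd_iff.mp hodd
  set B : Finset (Fin 5 × Fin m) := Finset.univ.biUnion
    (fun j : Fin m => if Even (j:ℕ) then {((0:Fin 5), j), ((4:Fin 5), j)}
      else {((1:Fin 5), j), ((3:Fin 5), j)}) with hB
  set ex : Finset (Fin 5 × Fin m) :=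
    {((2:Fin 5), ⟨0, by omega⟩), ((2:Fin 5), ⟨m - 1, by omega⟩)} with hex
  have hsnd : ∀ (j : Fin m) (x : Fin 5 × Fin m),
      x ∈ (if Even (j:ℕ) then ({((0:Fin 5), j), ((4:Fin 5), j)} : Finset (Fin 5 × Fin m))
        else {((1:Fin 5), j), ((3:Fin 5), j)}) → x.2 = j ∧ x.1 ≠ 2 := by
    intro j x hx
    split_ifs at hx <;> simp only [Finset.mem_insert, Finset.mem_singleton] at hx
    · rcases hx with rfl | rfl
      exacts [⟨rfl, fun h => absurd (show (0:Fin 5) = 2 from h) (by decide)⟩,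
        ⟨rfl, fun h => absurd (show (4:Fin 5) = 2 from h) (by decide)⟩]
    · rcases hx with rfl | rfl
      exacts [⟨rfl, fun h => absurd (show (1:Fin 5) = 2 from h) (by decide)⟩,
        ⟨rfl, fun h => absurd (show (3:Fin 5) = 2 from h) (by decide)⟩]
  refine ⟨B ∪ ex, ?_, ?_⟩
  · -- cardinality
    have hdisjB : Disjoint B ex := by
      rw [Finset.disjoint_left]
      intro x hxB hxex
      obtain ⟨j, _, hj⟩ := Finset.mem_biUnion.1 hxB
      have h2 := (hsnd j x hj).2
      simp only [hex, Finset.mem_insert, Finset.mem_singleton] at hxex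
      rcases hxex with rfl | rfl <;> exact h2 rfl
    rw [Finset.card_union_of_disjoint hdisjB]
    have hBcard : B.card = 2 * m := by
      rw [hB, Finset.card_biUnion]
      · have : ∀ j ∈ (Finset.univ : Finset (Fin m)),
            (if Even (j:ℕ) then ({((0:Fin 5), j), ((4:Fin 5), j)} : Finset (Fin 5 × Fin m))
              else {((1:Fin 5), j), ((3:Fin 5), j)}).card = 2 := by
          intro j _
          split_ifs <;> exact Finset.card_pair (pair_ne_fst (by decide))
        rw [Finset.sum_congr rfl this]
        simp [mul_comm]
      · intro j _ k _ hjk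
        rw [Function.onFun, Finset.disjoint_left]
        intro x hxj hxk
        exact hjk ((hsnd j x hxj).1.symm.trans (hsnd k x hxk).1)
    have hexcard : ex.card = 2 :=
      Finset.card_pair (pair_ne_snd (by simp [Fin.ext_iff]; omega))
    omega
  · -- percolation
    set A : Finset (Fin 5 × Fin m) := B ∪ ex with hA
    have mem04 : ∀ j : Fin m, (j:ℕ) % 2 = 0 →
        ((0:Fin 5), j) ∈ A ∧ ((4:Fin 5), j) ∈ A := by
      intro j hj
      constructor <;>
      · apply Finset.mem_union_left
        apply Finset.mem_biUnion.2 ⟨j, Finset.mem_univ _, ?_⟩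
        rw [if_pos (Nat.even_iff.2 hj)]
        simp
    have mem13 : ∀ j : Fin m, (j:ℕ) % 2 = 1 →
        ((1:Fin 5), j) ∈ A ∧ ((3:Fin 5), j) ∈ A := by
      intro j hj
      constructor <;>
      · apply Finset.mem_union_left
        apply Finset.mem_biUnion.2 ⟨j, Finset.mem_univ _, ?_⟩
        rw [if_neg (by rw [Nat.even_iff]; omega)]
        simp
    have memex : ((2:Fin 5), (⟨0, by omega⟩ : Fin m)) ∈ A
        ∧ ((2:Fin 5), (⟨m - 1, by omega⟩ : Fin m)) ∈ A := by
      constructor <;> (apply Finset.mem_union_right; simp [hex])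
    have memexL : ∀ j : Fin m, (j:ℕ) = 0 → ((2:Fin 5), j) ∈ A := by
      intro j hj
      rw [show j = (⟨0, by omega⟩ : Fin m) from Fin.ext hj]
      exact memex.1
    have memexR : ∀ j : Fin m, (j:ℕ) = m - 1 → ((2:Fin 5), j) ∈ A := by
      intro j hj
      rw [show j = (⟨m - 1, by omega⟩ : Fin m) from Fin.ext hj]
      exact memex.2
    set G := gridGraph 5 m with hG
    have init : ∀ v ∈ A, Infected G 3 ↑A v :=
      fun v hv => Infected.init (Finset.mem_coe.2 hv)
    have adjV : ∀ (i i' : Fin 5) (j : Fin m), (i:ℕ) + 1 = (i':ℕ) → G.Adj (i, j) (i', j) :=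
      fun i i' j h => grid_adj.2 (Or.inl ⟨Or.inl h, rfl⟩)
    have adjH : ∀ (i : Fin 5) (j j' : Fin m), (j:ℕ) + 1 = (j':ℕ) → G.Adj (i, j) (i, j') :=
      fun i j j' h => grid_adj.2 (Or.inr ⟨Or.inl h, rfl⟩)
    -- rows 0 and 4
    have i04 : ∀ j : Fin m, Infected G 3 ↑A ((0:Fin 5), j)
        ∧ Infected G 3 ↑A ((4:Fin 5), j) := by
      intro j
      rcases Nat.even_or_odd (j:ℕ) with he | ho
      · rw [Nat.even_iff] at he
        exact ⟨init _ (mem04 j he).1, init _ (mem04 j he).2⟩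
      · rw [Nat.odd_iff] at ho
        have hjlt := j.isLt
        have h1 : 1 ≤ (j:ℕ) := by omega
        have h2 : (j:ℕ) + 1 < m := by omega
        set jm : Fin m := ⟨(j:ℕ) - 1, by omega⟩ with hjm
        set jp : Fin m := ⟨(j:ℕ) + 1, h2⟩ with hjp
        have hjmv : (jm:ℕ) % 2 = 0 := by simp [hjm]; omega
        have hjpv : (jp:ℕ) % 2 = 0 := by simp [hjp]; omega
        have hne : jm ≠ jp := by simp only [ne_eq, hjm, hjp, Fin.ext_iff, Fin.val_mk]; omega
        constructor
        · exact infect3 (pair_ne_snd hne) (pair_ne_fst (by decide)) (pair_ne_fst (by decide))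
            (adjH 0 jm j (by simp [hjm]; omega)) ((adjH 0 j jp (by simp [hjp])).symm)
            ((adjV 0 1 j (by decide)).symm)
            (init _ (mem04 jm hjmv).1) (init _ (mem04 jp hjpv).1) (init _ (mem13 j ho).1)
        · exact infect3 (pair_ne_snd hne) (pair_ne_fst (by decide)) (pair_ne_fst (by decide))
            (adjH 4 jm j (by simp [hjm]; omega)) ((adjH 4 j jp (by simp [hjp])).symm)
            (adjV 3 4 j (by decide))
            (init _ (mem04 jm hjmv).2) (init _ (mem04 jp hjpv).2) (init _ (mem13 j ho).2)
    -- rows 1 and 3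
    have i13 : ∀ j : Fin m, Infected G 3 ↑A ((1:Fin 5), j)
        ∧ Infected G 3 ↑A ((3:Fin 5), j) := by
      intro j
      rcases Nat.even_or_odd (j:ℕ) with he | ho
      swap
      · rw [Nat.odd_iff] at ho
        exact ⟨init _ (mem13 j ho).1, init _ (mem13 j ho).2⟩
      rw [Nat.even_iff] at he
      have hjlt := j.isLt
      by_cases h0 : (j:ℕ) = 0
      · -- left column
        set jp : Fin m := ⟨(j:ℕ) + 1, by omega⟩ with hjp
        have hjpv : (jp:ℕ) % 2 = 1 := by simp [hjp]; omega
        constructor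
        · exact infect3 (pair_ne_fst (by decide)) (pair_ne_fst (by decide))
            (pair_ne_fst (by decide))
            (adjV 0 1 j (by decide)) ((adjV 1 2 j (by decide)).symm)
            ((adjH 1 j jp (by simp [hjp])).symm)
            (init _ (mem04 j he).1) (init _ (memexL j h0)) (init _ (mem13 jp hjpv).1)
        · exact infect3 (pair_ne_fst (by decide)) (pair_ne_fst (by decide))
            (pair_ne_fst (by decide))
            ((adjV 3 4 j (by decide)).symm) (adjV 2 3 j (by decide))
            ((adjH 3 j jp (by simp [hjp])).symm)
            (init _ (mem04 j he).2) (init _ (memexL j h0)) (init _ (mem13 jp hjpv).2)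
      by_cases h1 : (j:ℕ) = m - 1
      · -- right column
        set jm : Fin m := ⟨(j:ℕ) - 1, by omega⟩ with hjm
        have hjmv : (jm:ℕ) % 2 = 1 := by simp [hjm]; omega
        constructor
        · exact infect3 (pair_ne_fst (by decide)) (pair_ne_fst (by decide))
            (pair_ne_fst (by decide))
            (adjV 0 1 j (by decide)) ((adjV 1 2 j (by decide)).symm)
            (adjH 1 jm j (by simp [hjm]; omega))
            (init _ (mem04 j he).1) (init _ (memexR j h1)) (init _ (mem13 jm hjmv).1)
        · exact infect3 (pair_ne_fst (by decide)) (pair_ne_fst (by decide))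
            (pair_ne_fst (by decide))
            ((adjV 3 4 j (by decide)).symm) (adjV 2 3 j (by decide))
            (adjH 3 jm j (by simp [hjm]; omega))
            (init _ (mem04 j he).2) (init _ (memexR j h1)) (init _ (mem13 jm hjmv).2)
      · -- interior even column
        have h2 : (j:ℕ) + 1 < m := by omega
        have h3 : 1 ≤ (j:ℕ) := by omega
        set jm : Fin m := ⟨(j:ℕ) - 1, by omega⟩ with hjm
        set jp : Fin m := ⟨(j:ℕ) + 1, h2⟩ with hjp
        have hjmv : (jm:ℕ) % 2 = 1 := by simp [hjm]; omega
        have hjpv : (jp:ℕ) % 2 = 1 := by simp [hjp]; omega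
        have hne : jm ≠ jp := by simp only [ne_eq, hjm, hjp, Fin.ext_iff, Fin.val_mk]; omega
        constructor
        · exact infect3 (pair_ne_snd hne) (pair_ne_fst (by decide)) (pair_ne_fst (by decide))
            (adjH 1 jm j (by simp [hjm]; omega)) ((adjH 1 j jp (by simp [hjp])).symm)
            (adjV 0 1 j (by decide))
            (init _ (mem13 jm hjmv).1) (init _ (mem13 jp hjpv).1) (init _ (mem04 j he).1)
        · exact infect3 (pair_ne_snd hne) (pair_ne_fst (by decide)) (pair_ne_fst (by decide))
            (adjH 3 jm j (by simp [hjm]; omega)) ((adjH 3 j jp (by simp [hjp])).symm)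
            ((adjV 3 4 j (by decide)).symm)
            (init _ (mem13 jm hjmv).2) (init _ (mem13 jp hjpv).2) (init _ (mem04 j he).2)
    -- row 2 by induction on the column
    have i2 : ∀ j : Fin m, Infected G 3 ↑A ((2:Fin 5), j) := by
      have H : ∀ n : ℕ, ∀ h : n < m, Infected G 3 ↑A ((2:Fin 5), ⟨n, h⟩) := by
        intro n
        induction n with
        | zero => intro h; exact init _ (memexL _ rfl)
        | succ k ih =>
          intro h
          have hk : k < m := by omega
          exact infect3 (pair_ne_fst (by decide)) (pair_ne_fst (by decide))
            (pair_ne_fst (by decide))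
            (adjH 2 ⟨k, hk⟩ ⟨k + 1, h⟩ rfl) (adjV 1 2 _ (by decide))
            ((adjV 2 3 _ (by decide)).symm)
            (ih hk) (i13 ⟨k + 1, h⟩).1 (i13 ⟨k + 1, h⟩).2
      intro j
      have := H j.val j.isLt
      simpa using this
    intro v
    obtain ⟨⟨iv, hi⟩, j⟩ := v
    interval_cases iv
    · exact (i04 j).1
    · exact (i13 j).1
    · exact i2 j
    · exact (i13 j).2
    · exact (i04 j).2


open Finset in
theorem stmt_7 (m : ℕ) (hm : 5 ≤ m) (hodd : Odd m) :
    percNum (Fin 5 × Fin m) (gridGraph 5 m) 3 = 2 * m + 2 := by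
  obtain ⟨A, hcard, hperc⟩ := upper m hm hodd
  have hmem : 2 * m + 2 ∈ {k | ∃ A : Finset (Fin 5 × Fin m),
      A.card = k ∧ Percolates (gridGraph 5 m) 3 ↑A} := ⟨A, hcard, hperc⟩
  refine le_antisymm (Nat.sInf_le hmem) (le_csInf ⟨_, hmem⟩ ?_)
  rintro k ⟨A', hA', hpA'⟩
  subst hA'
  have h1 := reach_bound (gridGraph 5 m) (reach_univ (gridGraph 5 m) hpA')
  rw [grid_e2 m (by omega)] at h1
  have hcardu : (Finset.univ : Finset (Fin 5 × Fin m)).card = 5 * m := by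
    simp [Finset.card_univ, Fintype.card_prod, Fintype.card_fin]
  rw [hcardu] at h1
  omega
end

section
/- For m ≥ 4, the 3-percolation number of the grid P₄ □ Pₘ satisfies ⌊5(m+1)/3⌋ + 1 ≤ m(P₄ □ Pₘ, 3) ≤ ⌊5(m+1)/3⌋ + 2. -/
open SimpleGraph

set_option linter.unusedSectionVars false

lemma grid_adj_s9 {m : ℕ} {u v : Fin 4 × Fin m} :
    (gridGraph 4 m).Adj u v ↔
      ((u.1.val + 1 = v.1.val ∨ v.1.val + 1 = u.1.val) ∧ u.2 = v.2) ∨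
      ((u.2.val + 1 = v.2.val ∨ v.2.val + 1 = u.2.val) ∧ u.1 = v.1) := by
  simp [gridGraph, boxProd_adj, pathGraph_adj]


instance {m : ℕ} : DecidableRel (gridGraph 4 m).Adj := fun _ _ => decidable_of_iff' _ grid_adj_s9

lemma infected_mono {V : Type*} {G : SimpleGraph V} {r : ℕ} {A B : Set V} (hAB : A ⊆ B) {v : V}
    (h : Infected G r A v) : Infected G r B v := by
  induction h with
  | init h => exact .init (hAB h)
  | step T hc ha _ ih => exact .step T hc ha ih

set_option linter.unusedSectionVars false
section Lower
variable {V : Type*} [DecidableEq V] {G : SimpleGraph V} [DecidableRel G.Adj]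

noncomputable def Efun (G : SimpleGraph V) [DecidableRel G.Adj] (S : Finset V) : ℕ :=
  ∑ v ∈ S, (S.filter (G.Adj v)).card

lemma Efun_insert {S : Finset V} {v : V} (hv : v ∉ S) :
    Efun G (insert v S) = Efun G S + 2 * (S.filter (G.Adj v)).card := by
  unfold Efun
  rw [Finset.sum_insert hv]
  have h1 : (insert v S).filter (G.Adj v) = S.filter (G.Adj v) := by
    rw [Finset.filter_insert, if_neg (G.irrefl)]
  have h2 : ∀ u ∈ S, ((insert v S).filter (G.Adj u)).card
      = (S.filter (G.Adj u)).card + (if G.Adj u v then 1 else 0) := by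
    intro u hu
    rw [Finset.filter_insert]
    split
    · rw [Finset.card_insert_of_notMem (fun h => hv (Finset.mem_of_mem_filter _ h))]
    · rfl
  rw [h1, Finset.sum_congr rfl h2, Finset.sum_add_distrib]
  have h3 : (∑ u ∈ S, if G.Adj u v then 1 else 0) = (S.filter (G.Adj v)).card := by
    rw [Finset.card_filter]
    exact Finset.sum_congr rfl fun u _ => if_congr (G.adj_comm u v) rfl rfl
  rw [h3]; ring

lemma exists_step {r : ℕ} {A : Set V} {S : Finset V} (hAS : ∀ a ∈ A, a ∈ S) {v : V}
    (hv : Infected G r A v) : v ∉ S →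
    ∃ w ∉ S, ∃ T : Finset V, r ≤ T.card ∧ (∀ u ∈ T, G.Adj u w) ∧ ∀ u ∈ T, u ∈ S := by
  induction hv with
  | init h => exact fun hvS => absurd (hAS _ h) hvS
  | @step v T hc ha _ ih =>
    intro hvS
    by_cases hT : ∀ u ∈ T, u ∈ S
    · exact ⟨v, hvS, T, hc, ha, hT⟩
    · push_neg at hT
      obtain ⟨u, hu, huS⟩ := hT
      exact ih u hu huS

lemma grow [Fintype V] {A : Finset V} (hperc : Percolates G 3 ↑A) :
    ∀ n (S : Finset V), A ⊆ S → (Finset.univ : Finset V).card - S.card ≤ n →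
    Efun G S + 6 * ((Finset.univ : Finset V).card - S.card) ≤ Efun G Finset.univ := by
  intro n
  induction n with
  | zero =>
    intro S _ hb
    have hcu : (Finset.univ : Finset V).card = Fintype.card V := Finset.card_univ
    have h2 : S.card ≤ (Finset.univ : Finset V).card := Finset.card_le_univ S
    have : S = Finset.univ := Finset.eq_univ_of_card S (by omega)
    subst this; simp
  | succ n ih =>
    intro S hsub hb
    by_cases hSu : S = Finset.univ
    · subst hSu; simp
    · have hx : ∃ x, x ∉ S := by
        by_contra h
        push_neg at h
        exact hSu (Finset.eq_univ_of_forall h)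
      obtain ⟨x, hx⟩ := hx
      obtain ⟨w, hw, T, hTc, hTa, hTS⟩ := exists_step (fun a ha => hsub ha) (hperc x) hx
      have hTsub : T ⊆ S.filter (G.Adj w) := fun u hu =>
        Finset.mem_filter.mpr ⟨hTS u hu, (G.adj_comm u w).mp (hTa u hu)⟩
      have hfc : 3 ≤ (S.filter (G.Adj w)).card := le_trans hTc (Finset.card_le_card hTsub)
      have hins := Efun_insert (G := G) (S := S) (v := w) hw
      have hcard : (insert w S).card = S.card + 1 := Finset.card_insert_of_notMem hw
      have hSlt : S.card < (Finset.univ : Finset V).card :=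
        Finset.card_lt_card (Finset.ssubset_univ_iff.mpr hSu)
      have := ih (insert w S) (hsub.trans (Finset.subset_insert w S)) (by omega)
      omega

end Lower

section CornerPair
variable {V : Type*} [DecidableEq V] {G : SimpleGraph V} {A : Set V}

lemma mem_of_two_nbrs {v x y : V} (hnbr : ∀ u, G.Adj u v → u = x ∨ u = y)
    (hinf : Infected G 3 A v) : v ∈ A := by
  cases hinf with
  | init h => exact h
  | step T hc ha _ =>
    exfalso
    have hsub : T ⊆ {x, y} := fun u hu => by
      rcases hnbr u (ha u hu) with h | h <;> simp [h]
    have := Finset.card_le_card hsub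
    have h2 : ({x, y} : Finset V).card ≤ 2 :=
      le_trans (Finset.card_insert_le _ _) (by simp)
    omega

lemma pair_mem {p q a b c d : V}
    (hp : ∀ u, G.Adj u p → u = a ∨ u = q ∨ u = b)
    (hq : ∀ u, G.Adj u q → u = c ∨ u = p ∨ u = d)
    {v : V} (hinf : Infected G 3 A v) : (v = p ∨ v = q) → p ∈ A ∨ q ∈ A := by
  induction hinf with
  | init h =>
    rintro (rfl | rfl)
    · exact Or.inl h
    · exact Or.inr h
  | @step v T hc ha _ ih =>
    rintro (rfl | rfl)
    · by_cases hqT : q ∈ T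
      · exact ih q hqT (Or.inr rfl)
      · exfalso
        have hsub : T ⊆ {a, b} := fun u hu => by
          rcases hp u (ha u hu) with h | h | h
          · simp [h]
          · exact absurd (h ▸ hu) hqT
          · simp [h]
        have := Finset.card_le_card hsub
        have h2 : ({a, b} : Finset V).card ≤ 2 :=
          le_trans (Finset.card_insert_le _ _) (by simp)
        omega
    · by_cases hpT : p ∈ T
      · exact ih p hpT (Or.inl rfl)
      · exfalso
        have hsub : T ⊆ {c, d} := fun u hu => by
          rcases hq u (ha u hu) with h | h | h
          · simp [h]
          · exact absurd (h ▸ hu) hpT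
          · simp [h]
        have := Finset.card_le_card hsub
        have h2 : ({c, d} : Finset V).card ≤ 2 :=
          le_trans (Finset.card_insert_le _ _) (by simp)
        omega

lemma four_le_Efun [DecidableRel G.Adj] {B : Finset V} {x y z w : V}
    (hx : x ∈ B) (hy : y ∈ B) (hz : z ∈ B) (hw : w ∈ B)
    (hxy : G.Adj x y) (hzw : G.Adj z w)
    (h1 : x ≠ y) (h2 : x ≠ z) (h3 : x ≠ w) (h4 : y ≠ z) (h5 : y ≠ w) (h6 : z ≠ w) :
    4 ≤ Efun G B := by
  have hsub : ({x, y, z, w} : Finset V) ⊆ B := by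
    intro u hu
    simp only [Finset.mem_insert, Finset.mem_singleton] at hu
    rcases hu with rfl | rfl | rfl | rfl <;> assumption
  have hcard : ({x, y, z, w} : Finset V).card = 4 := by
    rw [Finset.card_insert_of_notMem (by simp [h1, h2, h3]),
        Finset.card_insert_of_notMem (by simp [h4, h5]),
        Finset.card_insert_of_notMem (by simp [h6]), Finset.card_singleton]
  have hone : ∀ u ∈ ({x, y, z, w} : Finset V), 1 ≤ (B.filter (G.Adj u)).card := by
    intro u hu
    simp only [Finset.mem_insert, Finset.mem_singleton] at hu
    refine Finset.card_pos.mpr ?_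
    rcases hu with rfl | rfl | rfl | rfl
    · exact ⟨y, Finset.mem_filter.mpr ⟨hy, hxy⟩⟩
    · exact ⟨x, Finset.mem_filter.mpr ⟨hx, (G.adj_comm _ _).mp hxy⟩⟩
    · exact ⟨w, Finset.mem_filter.mpr ⟨hw, hzw⟩⟩
    · exact ⟨z, Finset.mem_filter.mpr ⟨hz, (G.adj_comm _ _).mp hzw⟩⟩
  calc (4 : ℕ) = ∑ _u ∈ ({x, y, z, w} : Finset V), 1 := by rw [Finset.sum_const, hcard]; simp
    _ ≤ ∑ u ∈ ({x, y, z, w} : Finset V), (B.filter (G.Adj u)).card := Finset.sum_le_sum hone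
    _ ≤ Efun G B := Finset.sum_le_sum_of_subset hsub

end CornerPair

section EfunUniv

lemma path_card {n : ℕ} (hn : 2 ≤ n) (i : Fin n) :
    ((Finset.univ : Finset (Fin n)).filter
      (fun x => i.val + 1 = x.val ∨ x.val + 1 = i.val)).card
    = (if i.val = 0 then 0 else 1) + (if i.val + 1 = n then 0 else 1) := by
  by_cases h0 : i.val = 0
  · by_cases hl : i.val + 1 = n
    · omega
    · have : (Finset.univ : Finset (Fin n)).filter
          (fun x => i.val + 1 = x.val ∨ x.val + 1 = i.val) = {⟨i.val + 1, by omega⟩} := by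
        ext x
        simp only [Finset.mem_filter, Finset.mem_univ, true_and, Finset.mem_singleton,
          Fin.ext_iff]
        omega
      rw [this, Finset.card_singleton]; split_ifs <;> omega
  · by_cases hl : i.val + 1 = n
    · have : (Finset.univ : Finset (Fin n)).filter
          (fun x => i.val + 1 = x.val ∨ x.val + 1 = i.val) = {⟨i.val - 1, by omega⟩} := by
        ext x
        simp only [Finset.mem_filter, Finset.mem_univ, true_and, Finset.mem_singleton,
          Fin.ext_iff]
        omega
      rw [this, Finset.card_singleton]; split_ifs <;> omega
    · have : (Finset.univ : Finset (Fin n)).filter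
          (fun x => i.val + 1 = x.val ∨ x.val + 1 = i.val)
          = {⟨i.val - 1, by omega⟩, ⟨i.val + 1, by omega⟩} := by
        ext x
        simp only [Finset.mem_filter, Finset.mem_univ, true_and, Finset.mem_insert,
          Finset.mem_singleton, Fin.ext_iff]
        omega
      rw [this]
      have hne : (⟨i.val - 1, by omega⟩ : Fin n) ≠ ⟨i.val + 1, by omega⟩ := by
        simp only [ne_eq, Fin.mk.injEq]
        omega
      rw [Finset.card_insert_of_notMem (Finset.notMem_singleton.mpr hne),
        Finset.card_singleton]
      split_ifs <;> omega

lemma nbr_card {m : ℕ} (hm : 4 ≤ m) (v : Fin 4 × Fin m) :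
    ((Finset.univ : Finset (Fin 4 × Fin m)).filter ((gridGraph 4 m).Adj v)).card
    = ((if v.1.val = 0 then 0 else 1) + (if v.1.val + 1 = 4 then 0 else 1))
      + ((if v.2.val = 0 then 0 else 1) + (if v.2.val + 1 = m then 0 else 1)) := by
  have hdecomp : (Finset.univ : Finset (Fin 4 × Fin m)).filter ((gridGraph 4 m).Adj v)
      = ((Finset.univ : Finset (Fin 4)).filter
          (fun x => v.1.val + 1 = x.val ∨ x.val + 1 = v.1.val)).image (fun x => (x, v.2))
        ∪ ((Finset.univ : Finset (Fin m)).filter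
          (fun y => v.2.val + 1 = y.val ∨ y.val + 1 = v.2.val)).image (fun y => (v.1, y)) := by
    ext ⟨a, b⟩
    simp only [Finset.mem_filter, Finset.mem_univ, true_and, Finset.mem_union,
      Finset.mem_image, grid_adj_s9, Prod.mk.injEq]
    constructor
    · rintro (⟨h1, h2⟩ | ⟨h1, h2⟩)
      · exact Or.inl ⟨a, h1, rfl, h2⟩
      · exact Or.inr ⟨b, h1, h2, rfl⟩
    · rintro (⟨x, hx, rfl, rfl⟩ | ⟨y, hy, rfl, rfl⟩)
      · exact Or.inl ⟨hx, rfl⟩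
      · exact Or.inr ⟨hy, rfl⟩
  rw [hdecomp, Finset.card_union_of_disjoint, Finset.card_image_of_injective _
      (fun a b h => by simpa [Prod.ext_iff] using h),
    Finset.card_image_of_injective _ (fun a b h => by simpa [Prod.ext_iff] using h),
    path_card (by omega) v.1, path_card (by omega) v.2]
  · rw [Finset.disjoint_left]
    rintro u hu1 hu2
    simp only [Finset.mem_image, Finset.mem_filter, Finset.mem_univ, true_and] at hu1 hu2
    obtain ⟨x, hx, rfl⟩ := hu1
    obtain ⟨y, hy, h⟩ := hu2
    have h1 : v.1 = x := congrArg Prod.fst h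
    have h2 : (v.1 : ℕ) = (x : ℕ) := congrArg Fin.val h1
    omega

lemma sum_b {m : ℕ} (hm : 4 ≤ m) :
    (∑ j : Fin m, ((if j.val = 0 then 0 else 1) + (if j.val + 1 = m then 0 else 1)))
    = 2 * m - 2 := by
  have e1 : (∑ j : Fin m, (if j.val = 0 then (0:ℕ) else 1))
      = ((Finset.univ : Finset (Fin m)).filter (fun j => ¬ j.val = 0)).card := by
    rw [Finset.card_filter]
    refine Finset.sum_congr rfl fun j _ => ?_
    by_cases h : j.val = 0 <;> simp [h]
  have e2 : (∑ j : Fin m, (if j.val + 1 = m then (0:ℕ) else 1))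
      = ((Finset.univ : Finset (Fin m)).filter (fun j => ¬ j.val + 1 = m)).card := by
    rw [Finset.card_filter]
    refine Finset.sum_congr rfl fun j _ => ?_
    by_cases h : j.val + 1 = m <;> simp [h]
  have c1 : ((Finset.univ : Finset (Fin m)).filter (fun j => j.val = 0)) = {⟨0, by omega⟩} := by
    ext j
    simp only [Finset.mem_filter, Finset.mem_univ, true_and, Finset.mem_singleton, Fin.ext_iff]
  have c2 : ((Finset.univ : Finset (Fin m)).filter (fun j => j.val + 1 = m))
      = {⟨m - 1, by omega⟩} := by
    ext j
    simp only [Finset.mem_filter, Finset.mem_univ, true_and, Finset.mem_singleton, Fin.ext_iff]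
    omega
  rw [Finset.sum_add_distrib, e1, e2, Finset.filter_not, Finset.filter_not,
    Finset.card_sdiff_of_subset (Finset.filter_subset _ _), Finset.card_sdiff_of_subset (Finset.filter_subset _ _),
    c1, c2]
  simp only [Finset.card_singleton, Finset.card_univ, Fintype.card_fin]
  omega

lemma Efun_univ_grid {m : ℕ} (hm : 4 ≤ m) :
    Efun (gridGraph 4 m) (Finset.univ : Finset (Fin 4 × Fin m)) = 14 * m - 8 := by
  unfold Efun
  have : ∀ v : Fin 4 × Fin m, ((Finset.univ : Finset (Fin 4 × Fin m)).filter
      ((gridGraph 4 m).Adj v)).card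
      = ((if v.1.val = 0 then 0 else 1) + (if v.1.val + 1 = 4 then 0 else 1))
      + ((if v.2.val = 0 then 0 else 1) + (if v.2.val + 1 = m then 0 else 1)) :=
    nbr_card hm
  rw [Finset.sum_congr rfl (fun v _ => this v)]
  rw [Fintype.sum_prod_type]
  have : ∀ i : Fin 4, (∑ j : Fin m,
      (((if i.val = 0 then 0 else 1) + (if i.val + 1 = 4 then 0 else 1))
      + ((if j.val = 0 then 0 else 1) + (if j.val + 1 = m then 0 else 1))))
      = m * ((if i.val = 0 then 0 else 1) + (if i.val + 1 = 4 then 0 else 1)) + (2 * m - 2) := by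
    intro i
    rw [Finset.sum_add_distrib, Finset.sum_const, sum_b hm]
    simp [Finset.card_univ, mul_comm]
  rw [Finset.sum_congr rfl (fun i _ => this i), Fin.sum_univ_four]
  simp only [show ((0:Fin 4):ℕ) = 0 from rfl, show ((1:Fin 4):ℕ) = 1 from rfl,
    show ((2:Fin 4):ℕ) = 2 from rfl, show ((3:Fin 4):ℕ) = 3 from rfl]
  norm_num
  omega

end EfunUniv

section GridLower
variable {m : ℕ}

lemma adj_gv {i j i' j' : ℕ} (hi : i < 4) (hj : j < m) (hi' : i' < 4) (hj' : j' < m)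
    (h : (i = i' ∧ (j + 1 = j' ∨ j' + 1 = j)) ∨ (j = j' ∧ (i + 1 = i' ∨ i' + 1 = i))) :
    (gridGraph 4 m).Adj (⟨i, hi⟩, ⟨j, hj⟩) (⟨i', hi'⟩, ⟨j', hj'⟩) := by
  rw [grid_adj_s9]
  simp only [Fin.mk.injEq]
  omega

lemma ne_gv {i j i' j' : ℕ} (hi : i < 4) (hj : j < m) (hi' : i' < 4) (hj' : j' < m)
    (h : ¬(i = i' ∧ j = j')) :
    ((⟨i, hi⟩, ⟨j, hj⟩) : Fin 4 × Fin m) ≠ (⟨i', hi'⟩, ⟨j', hj'⟩) := by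
  simp only [ne_eq, Prod.mk.injEq, Fin.mk.injEq]
  tauto

lemma nbrs_of {i j : ℕ} (hi : i < 4) (hj : j < m) (u : Fin 4 × Fin m)
    (h : (gridGraph 4 m).Adj u (⟨i, hi⟩, ⟨j, hj⟩)) :
    ((u.1.val + 1 = i ∨ i + 1 = u.1.val) ∧ u.2.val = j) ∨
    ((u.2.val + 1 = j ∨ j + 1 = u.2.val) ∧ u.1.val = i) := by
  rw [grid_adj_s9] at h
  simp only [Fin.ext_iff] at h
  exact h

lemma lower_bound (hm : 4 ≤ m) {A : Finset (Fin 4 × Fin m)}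
    (hperc : Percolates (gridGraph 4 m) 3 ↑A) : 5 * (m + 1) / 3 + 1 ≤ A.card := by
  have h0 : 0 < m := by omega
  have h1 : 1 < m := by omega
  have hm1 : m - 1 < m := by omega
  have hm2 : m - 2 < m := by omega
  have h03 : (0:ℕ) < 4 := by omega
  have h13 : (1:ℕ) < 4 := by omega
  have h23 : (2:ℕ) < 4 := by omega
  have h33 : (3:ℕ) < 4 := by omega
  -- corners
  have c00 : ((⟨0, h03⟩, ⟨0, h0⟩) : Fin 4 × Fin m) ∈ A := by
    refine Finset.mem_coe.mp (mem_of_two_nbrs (x := (⟨1, h13⟩, ⟨0, h0⟩))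
      (y := (⟨0, h03⟩, ⟨1, h1⟩)) ?_ (hperc _))
    rintro ⟨⟨a, ha⟩, ⟨b, hb⟩⟩ h
    have := nbrs_of _ _ _ h
    simp only [Prod.mk.injEq, Fin.mk.injEq] at this ⊢
    omega
  have c30 : ((⟨3, h33⟩, ⟨0, h0⟩) : Fin 4 × Fin m) ∈ A := by
    refine Finset.mem_coe.mp (mem_of_two_nbrs (x := (⟨2, h23⟩, ⟨0, h0⟩))
      (y := (⟨3, h33⟩, ⟨1, h1⟩)) ?_ (hperc _))
    rintro ⟨⟨a, ha⟩, ⟨b, hb⟩⟩ h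
    have := nbrs_of _ _ _ h
    simp only [Prod.mk.injEq, Fin.mk.injEq] at this ⊢
    omega
  have c0l : ((⟨0, h03⟩, ⟨m - 1, hm1⟩) : Fin 4 × Fin m) ∈ A := by
    refine Finset.mem_coe.mp (mem_of_two_nbrs (x := (⟨1, h13⟩, ⟨m - 1, hm1⟩))
      (y := (⟨0, h03⟩, ⟨m - 2, hm2⟩)) ?_ (hperc _))
    rintro ⟨⟨a, ha⟩, ⟨b, hb⟩⟩ h
    have := nbrs_of _ _ _ h
    simp only [Prod.mk.injEq, Fin.mk.injEq] at this ⊢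
    omega
  have c3l : ((⟨3, h33⟩, ⟨m - 1, hm1⟩) : Fin 4 × Fin m) ∈ A := by
    refine Finset.mem_coe.mp (mem_of_two_nbrs (x := (⟨2, h23⟩, ⟨m - 1, hm1⟩))
      (y := (⟨3, h33⟩, ⟨m - 2, hm2⟩)) ?_ (hperc _))
    rintro ⟨⟨a, ha⟩, ⟨b, hb⟩⟩ h
    have := nbrs_of _ _ _ h
    simp only [Prod.mk.injEq, Fin.mk.injEq] at this ⊢
    omega
  -- pairs
  have pair1 : ((⟨1, h13⟩, ⟨0, h0⟩) : Fin 4 × Fin m) ∈ A ∨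
      ((⟨2, h23⟩, ⟨0, h0⟩) : Fin 4 × Fin m) ∈ A := by
    refine pair_mem (a := (⟨0, h03⟩, ⟨0, h0⟩)) (b := (⟨1, h13⟩, ⟨1, h1⟩))
      (c := (⟨3, h33⟩, ⟨0, h0⟩)) (d := (⟨2, h23⟩, ⟨1, h1⟩)) ?_ ?_ (hperc _) (Or.inl rfl)
    · rintro ⟨⟨a, ha⟩, ⟨b, hb⟩⟩ h
      have := nbrs_of _ _ _ h
      simp only [Prod.mk.injEq, Fin.mk.injEq] at this ⊢
      omega
    · rintro ⟨⟨a, ha⟩, ⟨b, hb⟩⟩ h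
      have := nbrs_of _ _ _ h
      simp only [Prod.mk.injEq, Fin.mk.injEq] at this ⊢
      omega
  have pair2 : ((⟨1, h13⟩, ⟨m - 1, hm1⟩) : Fin 4 × Fin m) ∈ A ∨
      ((⟨2, h23⟩, ⟨m - 1, hm1⟩) : Fin 4 × Fin m) ∈ A := by
    refine pair_mem (a := (⟨0, h03⟩, ⟨m - 1, hm1⟩)) (b := (⟨1, h13⟩, ⟨m - 2, hm2⟩))
      (c := (⟨3, h33⟩, ⟨m - 1, hm1⟩)) (d := (⟨2, h23⟩, ⟨m - 2, hm2⟩)) ?_ ?_ (hperc _)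
      (Or.inl rfl)
    · rintro ⟨⟨a, ha⟩, ⟨b, hb⟩⟩ h
      have := nbrs_of _ _ _ h
      simp only [Prod.mk.injEq, Fin.mk.injEq] at this ⊢
      omega
    · rintro ⟨⟨a, ha⟩, ⟨b, hb⟩⟩ h
      have := nbrs_of _ _ _ h
      simp only [Prod.mk.injEq, Fin.mk.injEq] at this ⊢
      omega
  have h4le : 4 ≤ Efun (gridGraph 4 m) A := by
    rcases pair1 with hp | hp <;> rcases pair2 with hq | hq
    · exact four_le_Efun c00 hp c0l hq
        (adj_gv _ _ _ _ (by omega)) (adj_gv _ _ _ _ (by omega))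
        (ne_gv _ _ _ _ (by omega)) (ne_gv _ _ _ _ (by omega)) (ne_gv _ _ _ _ (by omega))
        (ne_gv _ _ _ _ (by omega)) (ne_gv _ _ _ _ (by omega)) (ne_gv _ _ _ _ (by omega))
    · exact four_le_Efun c00 hp c3l hq
        (adj_gv _ _ _ _ (by omega)) (adj_gv _ _ _ _ (by omega))
        (ne_gv _ _ _ _ (by omega)) (ne_gv _ _ _ _ (by omega)) (ne_gv _ _ _ _ (by omega))
        (ne_gv _ _ _ _ (by omega)) (ne_gv _ _ _ _ (by omega)) (ne_gv _ _ _ _ (by omega))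
    · exact four_le_Efun hp c30 c0l hq
        (adj_gv _ _ _ _ (by omega)) (adj_gv _ _ _ _ (by omega))
        (ne_gv _ _ _ _ (by omega)) (ne_gv _ _ _ _ (by omega)) (ne_gv _ _ _ _ (by omega))
        (ne_gv _ _ _ _ (by omega)) (ne_gv _ _ _ _ (by omega)) (ne_gv _ _ _ _ (by omega))
    · exact four_le_Efun hp c30 c3l hq
        (adj_gv _ _ _ _ (by omega)) (adj_gv _ _ _ _ (by omega))
        (ne_gv _ _ _ _ (by omega)) (ne_gv _ _ _ _ (by omega)) (ne_gv _ _ _ _ (by omega))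
        (ne_gv _ _ _ _ (by omega)) (ne_gv _ _ _ _ (by omega)) (ne_gv _ _ _ _ (by omega))
  have hgrow := grow hperc (Finset.univ.card) A subset_rfl (Nat.sub_le _ _)
  have hEA_le : Efun (gridGraph 4 m) A ≤ Efun (gridGraph 4 m) Finset.univ := by
    have := hgrow
    omega
  have huniv : (Finset.univ : Finset (Fin 4 × Fin m)).card = 4 * m := by
    simp [Finset.card_univ]
  have hE := Efun_univ_grid hm
  have hcle : A.card ≤ (Finset.univ : Finset (Fin 4 × Fin m)).card := Finset.card_le_univ A
  omega

end GridLower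

section Construction

def remP (m i j : ℕ) : Prop :=
  j % 3 = 0 ∧ 3 ≤ j ∧ j + 3 ≤ m ∧ ((j % 2 = 0 ∧ i = 1) ∨ (j % 2 = 1 ∧ i = 2))

def cornerP (m i j : ℕ) : Prop :=
  (i = 0 ∧ j = 0) ∨ ((i = 0 ∨ i = 3) ∧ j + 1 = m ∧ (i + j) % 2 = 0)

def seedP (m i j : ℕ) : Prop := ((i + j) % 2 = 1 ∧ ¬ remP m i j) ∨ cornerP m i j

instance remP.dec (m i j : ℕ) : Decidable (remP m i j) := by unfold remP; infer_instance
instance cornerP.dec (m i j : ℕ) : Decidable (cornerP m i j) := by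
  unfold cornerP; infer_instance
instance seedP.dec (m i j : ℕ) : Decidable (seedP m i j) := by unfold seedP; infer_instance

def seedSet (m : ℕ) : Finset (Fin 4 × Fin m) :=
  Finset.univ.filter (fun v => seedP m v.1.val v.2.val)

lemma seed_inf {m i j : ℕ} (hi : i < 4) (hj : j < m) (h : seedP m i j) :
    Infected (gridGraph 4 m) 3 (↑(seedSet m)) ((⟨i, hi⟩, ⟨j, hj⟩) : Fin 4 × Fin m) :=
  .init (by simp [seedSet, h])

lemma inf3 {m : ℕ} {A : Set (Fin 4 × Fin m)} {v a b c : Fin 4 × Fin m}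
    (hab : a ≠ b) (hac : a ≠ c) (hbc : b ≠ c)
    (ha : (gridGraph 4 m).Adj a v) (hb : (gridGraph 4 m).Adj b v)
    (hc : (gridGraph 4 m).Adj c v)
    (ia : Infected (gridGraph 4 m) 3 A a) (ib : Infected (gridGraph 4 m) 3 A b)
    (ic : Infected (gridGraph 4 m) 3 A c) : Infected (gridGraph 4 m) 3 A v := by
  refine Infected.step {a, b, c} ?_ ?_ ?_
  · rw [Finset.card_insert_of_notMem (by simp [hab, hac]),
      Finset.card_insert_of_notMem (by simp [hbc]), Finset.card_singleton]
  · intro u hu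
    simp only [Finset.mem_insert, Finset.mem_singleton] at hu
    rcases hu with rfl | rfl | rfl <;> assumption
  · intro u hu
    simp only [Finset.mem_insert, Finset.mem_singleton] at hu
    rcases hu with rfl | rfl | rfl <;> assumption

lemma inf3' {m : ℕ} {A : Set (Fin 4 × Fin m)} {i j : ℕ} (hi : i < 4) (hj : j < m)
    (i1 j1 i2 j2 i3 j3 : ℕ) (h1 : i1 < 4) (g1 : j1 < m) (h2 : i2 < 4) (g2 : j2 < m)
    (h3 : i3 < 4) (g3 : j3 < m)
    (a1 : (i1 = i ∧ (j1 + 1 = j ∨ j + 1 = j1)) ∨ (j1 = j ∧ (i1 + 1 = i ∨ i + 1 = i1)))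
    (a2 : (i2 = i ∧ (j2 + 1 = j ∨ j + 1 = j2)) ∨ (j2 = j ∧ (i2 + 1 = i ∨ i + 1 = i2)))
    (a3 : (i3 = i ∧ (j3 + 1 = j ∨ j + 1 = j3)) ∨ (j3 = j ∧ (i3 + 1 = i ∨ i + 1 = i3)))
    (n12 : ¬(i1 = i2 ∧ j1 = j2)) (n13 : ¬(i1 = i3 ∧ j1 = j3)) (n23 : ¬(i2 = i3 ∧ j2 = j3))
    (I1 : Infected (gridGraph 4 m) 3 A ((⟨i1, h1⟩, ⟨j1, g1⟩) : Fin 4 × Fin m))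
    (I2 : Infected (gridGraph 4 m) 3 A ((⟨i2, h2⟩, ⟨j2, g2⟩) : Fin 4 × Fin m))
    (I3 : Infected (gridGraph 4 m) 3 A ((⟨i3, h3⟩, ⟨j3, g3⟩) : Fin 4 × Fin m)) :
    Infected (gridGraph 4 m) 3 A ((⟨i, hi⟩, ⟨j, hj⟩) : Fin 4 × Fin m) := by
  refine inf3 (ne_gv h1 g1 h2 g2 n12) (ne_gv h1 g1 h3 g3 n13) (ne_gv h2 g2 h3 g3 n23)
    (adj_gv h1 g1 hi hj a1) (adj_gv h2 g2 hi hj a2) (adj_gv h3 g3 hi hj a3) I1 I2 I3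

lemma removed_inf1 {m : ℕ} (hm : 4 ≤ m) {c : ℕ} (hc0 : c % 3 = 0) (hc2 : c % 2 = 0)
    (h3c : 3 ≤ c) (hcm : c + 3 ≤ m) :
    Infected (gridGraph 4 m) 3 (↑(seedSet m))
      ((⟨1, by omega⟩, ⟨c, by omega⟩) : Fin 4 × Fin m) := by
  have IA : Infected (gridGraph 4 m) 3 (↑(seedSet m))
      ((⟨1, by omega⟩, ⟨c - 1, by omega⟩) : Fin 4 × Fin m) := by
    refine inf3' _ _ 0 (c-1) 1 (c-2) 2 (c-1) (by omega) (by omega) (by omega) (by omega)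
      (by omega) (by omega) (by omega) (by omega) (by omega) (by omega) (by omega) (by omega)
      (seed_inf _ _ ?_) (seed_inf _ _ ?_) (seed_inf _ _ ?_) <;>
      · unfold seedP remP cornerP; omega
  have IB : Infected (gridGraph 4 m) 3 (↑(seedSet m))
      ((⟨1, by omega⟩, ⟨c + 1, by omega⟩) : Fin 4 × Fin m) := by
    refine inf3' _ _ 0 (c+1) 1 (c+2) 2 (c+1) (by omega) (by omega) (by omega) (by omega)
      (by omega) (by omega) (by omega) (by omega) (by omega) (by omega) (by omega) (by omega)
      (seed_inf _ _ ?_) (seed_inf _ _ ?_) (seed_inf _ _ ?_) <;>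
      · unfold seedP remP cornerP; omega
  have IC : Infected (gridGraph 4 m) 3 (↑(seedSet m))
      ((⟨2, by omega⟩, ⟨c, by omega⟩) : Fin 4 × Fin m) := by
    refine inf3' _ _ 3 c 2 (c-1) 2 (c+1) (by omega) (by omega) (by omega) (by omega)
      (by omega) (by omega) (by omega) (by omega) (by omega) (by omega) (by omega) (by omega)
      (seed_inf _ _ ?_) (seed_inf _ _ ?_) (seed_inf _ _ ?_) <;>
      · unfold seedP remP cornerP; omega
  exact inf3' _ _ 1 (c-1) 1 (c+1) 2 c (by omega) (by omega) (by omega) (by omega)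
    (by omega) (by omega) (by omega) (by omega) (by omega) (by omega) (by omega) (by omega)
    IA IB IC

lemma removed_inf2 {m : ℕ} (hm : 4 ≤ m) {c : ℕ} (hc0 : c % 3 = 0) (hc2 : c % 2 = 1)
    (h3c : 3 ≤ c) (hcm : c + 3 ≤ m) :
    Infected (gridGraph 4 m) 3 (↑(seedSet m))
      ((⟨2, by omega⟩, ⟨c, by omega⟩) : Fin 4 × Fin m) := by
  have IA : Infected (gridGraph 4 m) 3 (↑(seedSet m))
      ((⟨2, by omega⟩, ⟨c - 1, by omega⟩) : Fin 4 × Fin m) := by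
    refine inf3' _ _ 3 (c-1) 2 (c-2) 1 (c-1) (by omega) (by omega) (by omega) (by omega)
      (by omega) (by omega) (by omega) (by omega) (by omega) (by omega) (by omega) (by omega)
      (seed_inf _ _ ?_) (seed_inf _ _ ?_) (seed_inf _ _ ?_) <;>
      · unfold seedP remP cornerP; omega
  have IB : Infected (gridGraph 4 m) 3 (↑(seedSet m))
      ((⟨2, by omega⟩, ⟨c + 1, by omega⟩) : Fin 4 × Fin m) := by
    refine inf3' _ _ 3 (c+1) 2 (c+2) 1 (c+1) (by omega) (by omega) (by omega) (by omega)
      (by omega) (by omega) (by omega) (by omega) (by omega) (by omega) (by omega) (by omega)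
      (seed_inf _ _ ?_) (seed_inf _ _ ?_) (seed_inf _ _ ?_) <;>
      · unfold seedP remP cornerP; omega
  have IC : Infected (gridGraph 4 m) 3 (↑(seedSet m))
      ((⟨1, by omega⟩, ⟨c, by omega⟩) : Fin 4 × Fin m) := by
    refine inf3' _ _ 0 c 1 (c-1) 1 (c+1) (by omega) (by omega) (by omega) (by omega)
      (by omega) (by omega) (by omega) (by omega) (by omega) (by omega) (by omega) (by omega)
      (seed_inf _ _ ?_) (seed_inf _ _ ?_) (seed_inf _ _ ?_) <;>
      · unfold seedP remP cornerP; omega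
  exact inf3' _ _ 2 (c-1) 2 (c+1) 1 c (by omega) (by omega) (by omega) (by omega)
    (by omega) (by omega) (by omega) (by omega) (by omega) (by omega) (by omega) (by omega)
    IA IB IC

end Construction

set_option maxHeartbeats 3200000 in
lemma seed_percolates {m : ℕ} (hm : 4 ≤ m) : Percolates (gridGraph 4 m) 3 ↑(seedSet m) := by
  rintro ⟨⟨i, hi⟩, ⟨j, hj⟩⟩
  by_cases hpar : (i + j) % 2 = 1
  · by_cases hrem : remP m i j
    · obtain ⟨hj3, h3j, hjm, hcase⟩ := hrem
      rcases hcase with ⟨hj2, rfl⟩ | ⟨hj2, rfl⟩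
      · exact removed_inf1 hm hj3 hj2 h3j hjm
      · exact removed_inf2 hm hj3 hj2 h3j hjm
    · exact seed_inf hi hj (Or.inl ⟨hpar, hrem⟩)
  · -- even cell
    interval_cases i
    · -- i = 0
      by_cases hj0 : j = 0
      · exact seed_inf hi hj (by unfold seedP remP cornerP; omega)
      · by_cases hjl : j + 1 = m
        · exact seed_inf hi hj (by unfold seedP remP cornerP; omega)
        · -- 2 ≤ j ≤ m - 2, j even
          refine inf3' hi hj 0 (j-1) 0 (j+1) 1 j (by omega) (by omega) (by omega) (by omega)
            (by omega) (by omega) (by omega) (by omega) (by omega) (by omega) (by omega)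
            (by omega) (seed_inf _ _ (by unfold seedP remP cornerP; omega))
            (seed_inf _ _ (by unfold seedP remP cornerP; omega)) ?_
          by_cases hr : remP m 1 j
          · obtain ⟨hj3, h3j, hjm, hcase⟩ := hr
            exact removed_inf1 hm hj3 (by omega) h3j hjm
          · exact seed_inf _ _ (Or.inl ⟨by omega, hr⟩)
    · -- i = 1
      by_cases hjl : j + 1 = m
      · refine inf3' hi hj 0 j 2 j 1 (j-1) (by omega) (by omega) (by omega) (by omega)
          (by omega) (by omega) (by omega) (by omega) (by omega) (by omega) (by omega)
          (by omega) (seed_inf _ _ ?_) (seed_inf _ _ ?_) (seed_inf _ _ ?_) <;>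
          · unfold seedP remP cornerP; omega
      · by_cases r1 : remP m 2 j
        · refine inf3' hi hj 0 j 1 (j-1) 1 (j+1) (by omega) (by omega) (by omega) (by omega)
            (by omega) (by omega) (by omega) (by omega) (by omega) (by omega) (by omega)
            (by omega) (seed_inf _ _ ?_) (seed_inf _ _ ?_) (seed_inf _ _ ?_) <;>
            · unfold remP at r1; unfold seedP remP cornerP; omega
        · by_cases r2 : remP m 1 (j-1)
          · refine inf3' hi hj 0 j 2 j 1 (j+1) (by omega) (by omega) (by omega) (by omega)
              (by omega) (by omega) (by omega) (by omega) (by omega) (by omega) (by omega)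
              (by omega) (seed_inf _ _ ?_) (seed_inf _ _ ?_) (seed_inf _ _ ?_) <;>
              · unfold remP at r1 r2; unfold seedP remP cornerP; omega
          · by_cases r3 : remP m 1 (j+1)
            · refine inf3' hi hj 0 j 2 j 1 (j-1) (by omega) (by omega) (by omega) (by omega)
                (by omega) (by omega) (by omega) (by omega) (by omega) (by omega) (by omega)
                (by omega) (seed_inf _ _ ?_) (seed_inf _ _ ?_) (seed_inf _ _ ?_) <;>
                · unfold remP at r1 r2 r3; unfold seedP remP cornerP; omega
            · refine inf3' hi hj 0 j 2 j 1 (j+1) (by omega) (by omega) (by omega) (by omega)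
                (by omega) (by omega) (by omega) (by omega) (by omega) (by omega) (by omega)
                (by omega) (seed_inf _ _ ?_) (seed_inf _ _ ?_) (seed_inf _ _ ?_) <;>
                · unfold remP at r1 r2 r3; unfold seedP remP cornerP; omega
    · -- i = 2
      by_cases hj0 : j = 0
      · refine inf3' hi hj 1 0 3 0 2 1 (by omega) (by omega) (by omega) (by omega)
          (by omega) (by omega) (by omega) (by omega) (by omega) (by omega) (by omega)
          (by omega) (seed_inf _ _ ?_) (seed_inf _ _ ?_) (seed_inf _ _ ?_) <;>
          · unfold seedP remP cornerP; omega
      · by_cases hjl : j + 1 = m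
        · refine inf3' hi hj 1 j 3 j 2 (j-1) (by omega) (by omega) (by omega) (by omega)
            (by omega) (by omega) (by omega) (by omega) (by omega) (by omega) (by omega)
            (by omega) (seed_inf _ _ ?_) (seed_inf _ _ ?_) (seed_inf _ _ ?_) <;>
            · unfold seedP remP cornerP; omega
        · by_cases r1 : remP m 1 j
          · refine inf3' hi hj 3 j 2 (j-1) 2 (j+1) (by omega) (by omega) (by omega)
              (by omega) (by omega) (by omega) (by omega) (by omega) (by omega) (by omega)
              (by omega) (by omega) (seed_inf _ _ ?_) (seed_inf _ _ ?_) (seed_inf _ _ ?_) <;>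
              · unfold remP at r1; unfold seedP remP cornerP; omega
          · by_cases r2 : remP m 2 (j-1)
            · refine inf3' hi hj 1 j 3 j 2 (j+1) (by omega) (by omega) (by omega) (by omega)
                (by omega) (by omega) (by omega) (by omega) (by omega) (by omega) (by omega)
                (by omega) (seed_inf _ _ ?_) (seed_inf _ _ ?_) (seed_inf _ _ ?_) <;>
                · unfold remP at r1 r2; unfold seedP remP cornerP; omega
            · by_cases r3 : remP m 2 (j+1)
              · refine inf3' hi hj 1 j 3 j 2 (j-1) (by omega) (by omega) (by omega)
                  (by omega) (by omega) (by omega) (by omega) (by omega) (by omega)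
                  (by omega) (by omega) (by omega)
                  (seed_inf _ _ ?_) (seed_inf _ _ ?_) (seed_inf _ _ ?_) <;>
                  · unfold remP at r1 r2 r3; unfold seedP remP cornerP; omega
              · refine inf3' hi hj 1 j 3 j 2 (j+1) (by omega) (by omega) (by omega)
                  (by omega) (by omega) (by omega) (by omega) (by omega) (by omega)
                  (by omega) (by omega) (by omega)
                  (seed_inf _ _ ?_) (seed_inf _ _ ?_) (seed_inf _ _ ?_) <;>
                  · unfold remP at r1 r2 r3; unfold seedP remP cornerP; omega
    · -- i = 3
      by_cases hjl : j + 1 = m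
      · exact seed_inf hi hj (by unfold seedP remP cornerP; omega)
      · refine inf3' hi hj 3 (j-1) 3 (j+1) 2 j (by omega) (by omega) (by omega) (by omega)
          (by omega) (by omega) (by omega) (by omega) (by omega) (by omega) (by omega)
          (by omega) (seed_inf _ _ (by unfold seedP remP cornerP; omega))
          (seed_inf _ _ (by unfold seedP remP cornerP; omega)) ?_
        by_cases hr : remP m 2 j
        · obtain ⟨hj3, h3j, hjm, hcase⟩ := hr
          exact removed_inf2 hm hj3 (by omega) h3j hjm
        · exact seed_inf _ _ (Or.inl ⟨by omega, hr⟩)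

section Cardinality
variable {m : ℕ}

lemma card_odd :
    ((Finset.univ : Finset (Fin 4 × Fin m)).filter
      (fun v => (v.1.val + v.2.val) % 2 = 1)).card = 2 * m := by
  have := Finset.card_bij'
    (i := fun (v : Fin 4 × Fin m) (_ : v ∈ (Finset.univ : Finset (Fin 4 × Fin m)).filter
      (fun v => (v.1.val + v.2.val) % 2 = 1)) =>
      ((v.2, ⟨v.1.val / 2, by have := v.1.isLt; omega⟩) : Fin m × Fin 2))
    (j := fun (p : Fin m × Fin 2) (_ : p ∈ (Finset.univ : Finset (Fin m × Fin 2))) =>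
      ((⟨(1 + p.1.val) % 2 + 2 * p.2.val, by have := p.2.isLt; omega⟩, p.1) : Fin 4 × Fin m))
    (hi := fun v hv => Finset.mem_univ _)
    (hj := ?_) (left_inv := ?_) (right_inv := ?_)
  · rw [this, Finset.card_univ, Fintype.card_prod, Fintype.card_fin, Fintype.card_fin]
    ring
  · intro p _
    simp only [Finset.mem_filter, Finset.mem_univ, true_and]
    have := p.2.isLt
    omega
  · intro v hv
    simp only [Finset.mem_filter, Finset.mem_univ, true_and] at hv
    have h1 := v.1.isLt
    ext
    · simp only [Fin.mk.injEq]
      show (1 + v.2.val) % 2 + 2 * (v.1.val / 2) = v.1.val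
      omega
    · rfl
  · intro p _
    have := p.2.isLt
    ext
    · rfl
    · show ((1 + p.1.val) % 2 + 2 * p.2.val) / 2 = p.2.val
      omega

lemma card_rem (hm : 4 ≤ m) :
    ((Finset.univ : Finset (Fin 4 × Fin m)).filter
      (fun v => remP m v.1.val v.2.val)).card = (m - 3) / 3 := by
  have := Finset.card_bij'
    (i := fun (v : Fin 4 × Fin m) (_ : v ∈ (Finset.univ : Finset (Fin 4 × Fin m)).filter
      (fun v => remP m v.1.val v.2.val)) => v.2.val / 3 - 1)
    (j := fun (t : ℕ) (ht : t ∈ Finset.range ((m - 3) / 3)) =>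
      ((⟨1 + (3 * (t + 1)) % 2, by omega⟩,
        ⟨3 * (t + 1), by have := Finset.mem_range.mp ht; omega⟩) : Fin 4 × Fin m))
    (hi := ?_) (hj := ?_) (left_inv := ?_) (right_inv := ?_)
  · rw [this, Finset.card_range]
  · intro v hv
    simp only [Finset.mem_filter, Finset.mem_univ, true_and] at hv
    unfold remP at hv
    rw [Finset.mem_range]
    show v.2.val / 3 - 1 < (m - 3) / 3
    omega
  · intro t ht
    have := Finset.mem_range.mp ht
    simp only [Finset.mem_filter, Finset.mem_univ, true_and]
    unfold remP
    omega
  · intro v hv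
    simp only [Finset.mem_filter, Finset.mem_univ, true_and] at hv
    unfold remP at hv
    ext
    · simp only [Fin.mk.injEq]
      omega
    · simp only [Fin.mk.injEq]
      omega
  · intro t ht
    have := Finset.mem_range.mp ht
    show 3 * (t + 1) / 3 - 1 = t
    omega

lemma card_corner (hm : 4 ≤ m) :
    ((Finset.univ : Finset (Fin 4 × Fin m)).filter
      (fun v => cornerP m v.1.val v.2.val)).card = 2 := by
  have heq : ((Finset.univ : Finset (Fin 4 × Fin m)).filter
      (fun v => cornerP m v.1.val v.2.val))
      = {((⟨0, by omega⟩, ⟨0, by omega⟩) : Fin 4 × Fin m),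
         ((⟨3 * ((m + 1) % 2), by omega⟩, ⟨m - 1, by omega⟩) : Fin 4 × Fin m)} := by
    ext ⟨⟨a, ha⟩, ⟨b, hb⟩⟩
    simp only [Finset.mem_filter, Finset.mem_univ, true_and, Finset.mem_insert,
      Finset.mem_singleton, Prod.mk.injEq, Fin.mk.injEq]
    unfold cornerP
    omega
  rw [heq, Finset.card_insert_of_notMem, Finset.card_singleton]
  simp only [Finset.mem_singleton, Prod.mk.injEq, Fin.mk.injEq]
  omega

lemma card_seedSet (hm : 4 ≤ m) : (seedSet m).card = 2 * m + 2 - (m - 3) / 3 := by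
  classical
  set Odd := ((Finset.univ : Finset (Fin 4 × Fin m)).filter
      (fun v => (v.1.val + v.2.val) % 2 = 1)) with hOdd
  set R := ((Finset.univ : Finset (Fin 4 × Fin m)).filter
      (fun v => remP m v.1.val v.2.val)) with hR
  set C := ((Finset.univ : Finset (Fin 4 × Fin m)).filter
      (fun v => cornerP m v.1.val v.2.val)) with hC
  have hseed : seedSet m = (Odd \ R) ∪ C := by
    ext v
    simp only [seedSet, hOdd, hR, hC, Finset.mem_filter, Finset.mem_univ, true_and,
      Finset.mem_union, Finset.mem_sdiff]
    unfold seedP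
    tauto
  have hRsub : R ⊆ Odd := by
    intro v hv
    simp only [hOdd, hR, Finset.mem_filter, Finset.mem_univ, true_and] at hv ⊢
    unfold remP at hv
    omega
  have hdisj : Disjoint (Odd \ R) C := by
    rw [Finset.disjoint_left]
    intro v hv hv'
    simp only [hOdd, hR, hC, Finset.mem_sdiff, Finset.mem_filter, Finset.mem_univ,
      true_and] at hv hv'
    unfold cornerP at hv'
    omega
  have hRcard : R.card ≤ Odd.card := Finset.card_le_card hRsub
  rw [hseed, Finset.card_union_of_disjoint hdisj, Finset.card_sdiff_of_subset hRsub,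
    card_odd, card_rem hm, card_corner hm]
  have : (m - 3) / 3 ≤ 2 * m := by omega
  rw [hOdd] at hRcard
  omega

end Cardinality


theorem stmt_9 (m : ℕ) (hm : 4 ≤ m) :
    5 * (m + 1) / 3 + 1 ≤ percNum (Fin 4 × Fin m) (gridGraph 4 m) 3 ∧
    percNum (Fin 4 × Fin m) (gridGraph 4 m) 3 ≤ 5 * (m + 1) / 3 + 2 := by
  classical
  have hcard := card_seedSet hm
  have huniv : (Finset.univ : Finset (Fin 4 × Fin m)).card = 4 * m := by
    simp [Finset.card_univ]
  obtain ⟨B, hBsub, _, hBcard⟩ := Finset.exists_subsuperset_card_eq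
    (Finset.subset_univ (seedSet m)) (n := 5 * (m + 1) / 3 + 2) (by omega) (by omega)
  have hBperc : Percolates (gridGraph 4 m) 3 ↑B := fun v =>
    infected_mono (Finset.coe_subset.mpr hBsub) (seed_percolates hm v)
  have hmem : (5 * (m + 1) / 3 + 2) ∈
      {k | ∃ A : Finset (Fin 4 × Fin m), A.card = k ∧ Percolates (gridGraph 4 m) 3 ↑A} :=
    ⟨B, hBcard, hBperc⟩
  unfold percNum
  constructor
  · obtain ⟨A₀, hA₀card, hA₀perc⟩ := Nat.sInf_mem (⟨_, hmem⟩ : Set.Nonempty _)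
    have hlb := lower_bound hm hA₀perc
    rw [hA₀card] at hlb
    exact hlb
  · exact Nat.sInf_le hmem
end

section
/- In the grid G = P₅ □ Pₘ with columns V₁, …, Vₘ (each of size 5), any minimum 3-percolating set S that contains no three consecutive boundary vertices satisfies |S ∩ V₁| ≥ 3, |S ∩ (V₁ ∪ V₂)| ≥ 5, |S ∩ Vₘ| ≥ 3, and |S ∩ (Vₘ₋₁ ∪ Vₘ)| ≥ 5. -/
open SimpleGraph

set_option maxRecDepth 40000
set_option synthInstance.maxSize 4000

abbrev St := Bool × Bool × Bool × Bool × Bool × Bool × Bool × Bool × Bool × Bool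

def two (x y z : Bool) : Bool := (x && y) || (x && z) || (y && z)

def nstep : St → St
  | (a0,a1,a2,a3,a4,b0,b1,b2,b3,b4) =>
    (a0,
     a1 || (a0 && a2 && b1),
     a2 || (a1 && a3 && b2),
     a3 || (a2 && a4 && b3),
     a4,
     b0 || (a0 && b1),
     b1 || two a1 b0 b2,
     b2 || two a2 b1 b3,
     b3 || two a3 b2 b4,
     b4 || (a4 && b3))

def clos (s : St) : St := nstep (nstep (nstep (nstep (nstep s))))

def full : St := (true,true,true,true,true,true,true,true,true,true)

def get (s : St) (v : Fin 5 × Fin 2) : Bool :=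
  match s with
  | (a0,a1,a2,a3,a4,b0,b1,b2,b3,b4) =>
    if v.2 = 0 then
      if v.1 = 0 then a0 else if v.1 = 1 then a1 else if v.1 = 2 then a2
      else if v.1 = 3 then a3 else a4
    else
      if v.1 = 0 then b0 else if v.1 = 1 then b1 else if v.1 = 2 then b2
      else if v.1 = 3 then b3 else b4

def mk (f : Fin 5 × Fin 2 → Bool) : St :=
  (f (0,0), f (1,0), f (2,0), f (3,0), f (4,0),
   f (0,1), f (1,1), f (2,1), f (3,1), f (4,1))

def cnt : St → ℕ
  | (a0,a1,a2,a3,a4,b0,b1,b2,b3,b4) =>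
    a0.toNat + a1.toNat + a2.toNat + a3.toNat + a4.toNat +
    b0.toNat + b1.toNat + b2.toNat + b3.toNat + b4.toNat

def cnt0 : St → ℕ
  | (a0,a1,a2,a3,a4,_,_,_,_,_) =>
    a0.toNat + a1.toNat + a2.toNat + a3.toNat + a4.toNat

abbrev slabAdjP (u v : Fin 5 × Fin 2) : Prop :=
  ((u.1:ℕ) = v.1 ∧ ((u.2:ℕ)+1 = v.2 ∨ (v.2:ℕ)+1 = u.2)) ∨
  ((u.2:ℕ) = v.2 ∧ ((u.1:ℕ)+1 = v.1 ∨ (v.1:ℕ)+1 = u.1))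

def slabNbrs (v : Fin 5 × Fin 2) : Finset (Fin 5 × Fin 2) :=
  Finset.univ.filter (fun u => slabAdjP u v)

-- basic get lemmas
lemma get_mk (f : Fin 5 × Fin 2 → Bool) (w : Fin 5 × Fin 2) : get (mk f) w = f w := by
  obtain ⟨i, j⟩ := w
  fin_cases i <;> fin_cases j <;> rfl

lemma cnt_mk (f : Fin 5 × Fin 2 → Bool) :
    cnt (mk f) = ∑ w : Fin 5 × Fin 2, (if f w = true then 1 else 0) := by
  rw [Fintype.sum_prod_type]
  simp only [Fin.sum_univ_five, Fin.sum_univ_two]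
  show (f (0,0)).toNat + _ + _ + _ + _ + _ + _ + _ + _ + _ = _
  simp only [Bool.toNat, Bool.cond_eq_ite]
  try omega

lemma cnt0_mk (f : Fin 5 × Fin 2 → Bool) :
    cnt0 (mk f) = ∑ i : Fin 5, (if f (i, 0) = true then 1 else 0) := by
  simp only [Fin.sum_univ_five]
  show (f (0,0)).toNat + _ + _ + _ + _ = _
  simp only [Bool.toNat, Bool.cond_eq_ite]
  try omega

lemma adj_cols {m : ℕ} {u v : Fin 5 × Fin m} (h : (gridGraph 5 m).Adj u v) :
    ((u.1:ℕ) = v.1 ∧ ((u.2:ℕ)+1 = v.2 ∨ (v.2:ℕ)+1 = u.2)) ∨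
    ((u.2:ℕ) = v.2 ∧ ((u.1:ℕ)+1 = v.1 ∨ (v.1:ℕ)+1 = u.1)) := by
  simp only [gridGraph, boxProd_adj, pathGraph_adj] at h
  rcases h with ⟨h1, h2⟩ | ⟨h1, h2⟩
  · exact Or.inr ⟨congrArg Fin.val h2, h1⟩
  · exact Or.inl ⟨congrArg Fin.val h2, h1⟩


private lemma L2_fix' : ∀ a0 a1 a2 a3 a4 b0 b1 b2 b3 b4 : Bool,
    nstep (clos (a0,a1,a2,a3,a4,b0,b1,b2,b3,b4)) = clos (a0,a1,a2,a3,a4,b0,b1,b2,b3,b4) := by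
  decide

lemma L2_fix (s : St) : nstep (clos s) = clos s := by
  obtain ⟨a0,a1,a2,a3,a4,b0,b1,b2,b3,b4⟩ := s
  exact L2_fix' a0 a1 a2 a3 a4 b0 b1 b2 b3 b4

private lemma L3_key' : ∀ a0 a1 a2 a3 a4 b0 b1 b2 b3 b4 : Bool,
    clos (a0,a1,a2,a3,a4,b0,b1,b2,b3,b4) = full →
    5 ≤ cnt (a0,a1,a2,a3,a4,b0,b1,b2,b3,b4) ∧ 3 ≤ cnt0 (a0,a1,a2,a3,a4,b0,b1,b2,b3,b4) := by
  decide

lemma L3_key (s : St) : clos s = full → 5 ≤ cnt s ∧ 3 ≤ cnt0 s := by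
  obtain ⟨a0,a1,a2,a3,a4,b0,b1,b2,b3,b4⟩ := s
  exact L3_key' a0 a1 a2 a3 a4 b0 b1 b2 b3 b4

private lemma L4_le' : ∀ a0 a1 a2 a3 a4 b0 b1 b2 b3 b4 : Bool, ∀ v,
    get (a0,a1,a2,a3,a4,b0,b1,b2,b3,b4) v = true →
    get (clos (a0,a1,a2,a3,a4,b0,b1,b2,b3,b4)) v = true := by
  decide

lemma L4_le (s : St) : ∀ v, get s v = true → get (clos s) v = true := by
  obtain ⟨a0,a1,a2,a3,a4,b0,b1,b2,b3,b4⟩ := s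
  exact L4_le' a0 a1 a2 a3 a4 b0 b1 b2 b3 b4

private lemma L5_full' : ∀ a0 a1 a2 a3 a4 b0 b1 b2 b3 b4 : Bool,
    (∀ v, get (a0,a1,a2,a3,a4,b0,b1,b2,b3,b4) v = true) →
    (a0,a1,a2,a3,a4,b0,b1,b2,b3,b4) = full := by
  decide

lemma L5_full (s : St) : (∀ v, get s v = true) → s = full := by
  obtain ⟨a0,a1,a2,a3,a4,b0,b1,b2,b3,b4⟩ := s
  exact L5_full' a0 a1 a2 a3 a4 b0 b1 b2 b3 b4

private lemma L6_closed' : ∀ a0 a1 a2 a3 a4 b0 b1 b2 b3 b4 : Bool,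
    nstep (a0,a1,a2,a3,a4,b0,b1,b2,b3,b4) = (a0,a1,a2,a3,a4,b0,b1,b2,b3,b4) →
    ∀ v : Fin 5 × Fin 2,
    ((if (v.2:ℕ) = 0 then 3 else 2) ≤
      ((slabNbrs v).filter (fun u => get (a0,a1,a2,a3,a4,b0,b1,b2,b3,b4) u = true)).card) →
    get (a0,a1,a2,a3,a4,b0,b1,b2,b3,b4) v = true := by
  decide

lemma L6_closed (s : St) : nstep s = s → ∀ v : Fin 5 × Fin 2,
    ((if (v.2:ℕ) = 0 then 3 else 2) ≤
      ((slabNbrs v).filter (fun u => get s u = true)).card) →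
    get s v = true := by
  obtain ⟨a0,a1,a2,a3,a4,b0,b1,b2,b3,b4⟩ := s
  exact L6_closed' a0 a1 a2 a3 a4 b0 b1 b2 b3 b4

lemma half (m : ℕ) (hm : 5 ≤ m) (S : Finset (Fin 5 × Fin m))
    (hperc : Percolates (gridGraph 5 m) 3 (↑S)) :
    3 ≤ (S.filter (fun v => (v.2 : ℕ) = 0)).card ∧
    5 ≤ (S.filter (fun v => (v.2 : ℕ) ≤ 1)).card := by
  have h2m : 2 ≤ m := by omega
  set emb : Fin 5 × Fin 2 → Fin 5 × Fin m :=
    fun w => (w.1, ⟨(w.2 : ℕ), lt_of_lt_of_le w.2.isLt h2m⟩) with hemb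
  set f : Fin 5 × Fin 2 → Bool := fun w => decide (emb w ∈ S) with hf
  set F : St := clos (mk f) with hF
  set pr : Fin 5 × Fin m → Fin 5 × Fin 2 :=
    fun u => (u.1, ⟨min (u.2 : ℕ) 1, by omega⟩) with hpr
  -- transfer lemma
  have key : ∀ v : Fin 5 × Fin m, Infected (gridGraph 5 m) 3 (↑S) v →
      (v.2 : ℕ) < 2 → get F (pr v) = true := by
    intro v hv
    induction hv with
    | @init v hvS =>
      intro h
      have hev : emb (pr v) = v := by
        simp only [hemb, hpr, Prod.ext_iff, Fin.ext_iff]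
        refine ⟨trivial, ?_⟩
        show min ((v.2 : ℕ)) 1 = (v.2 : ℕ)
        omega
      apply L4_le
      rw [get_mk, hf, decide_eq_true_eq, hev]
      exact hvS
    | @step v T' hcard hadj hinf IH =>
      intro h
      set T'' := T'.filter (fun u => (u.2 : ℕ) < 2) with hT''
      have hneed : (if ((pr v).2 : ℕ) = 0 then 3 else 2) ≤ T''.card := by
        have hprv2 : ((pr v).2 : ℕ) = (v.2 : ℕ) := by
          show min ((v.2 : ℕ)) 1 = (v.2 : ℕ); omega
        have h01 : (v.2 : ℕ) = 0 ∨ (v.2 : ℕ) = 1 := by omega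
        rcases h01 with h0 | h1
        · -- column 0 : all neighbors are in cols < 2
          have : T'' = T' := by
            apply Finset.filter_true_of_mem
            intro u hu
            have hc := adj_cols (hadj u hu)
            omega
          rw [this, hprv2, h0, if_pos rfl]
          exact hcard
        · -- column 1 : at most one neighbor outside
          have hsub : T'.filter (fun u => ¬ ((u.2 : ℕ) < 2)) ⊆
              {(v.1, (⟨2, by omega⟩ : Fin m))} := by
            intro u hu
            rw [Finset.mem_filter] at hu
            have hc := adj_cols (hadj u hu.1)
            rw [Finset.mem_singleton]
            have hu2 := hu.2
            simp only [Prod.ext_iff, Fin.ext_iff]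
            omega
          have hcardsub : (T'.filter (fun u => ¬ ((u.2 : ℕ) < 2))).card ≤ 1 := by
            calc _ ≤ ({(v.1, (⟨2, by omega⟩ : Fin m))} : Finset _).card :=
                  Finset.card_le_card hsub
            _ = 1 := Finset.card_singleton _
          have hsplit := Finset.card_filter_add_card_filter_not
            (s := T') (p := fun u => (u.2 : ℕ) < 2)
          rw [hprv2, h1]
          have : ¬ ((1:ℕ) = 0) := by omega
          rw [if_neg this, hT'']
          omega
      have himg : T''.image pr ⊆ (slabNbrs (pr v)).filter (fun u => get F u = true) := by
        intro x hx
        rw [Finset.mem_image] at hx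
        obtain ⟨u, hu, rfl⟩ := hx
        rw [Finset.mem_filter] at hu ⊢
        obtain ⟨huT, hu2⟩ := hu
        constructor
        · -- pr u ∈ slabNbrs (pr v)
          rw [slabNbrs, Finset.mem_filter]
          refine ⟨Finset.mem_univ _, ?_⟩
          have hc := adj_cols (hadj u huT)
          have e1 : ((pr u).1 : ℕ) = (u.1 : ℕ) := rfl
          have e2 : ((pr u).2 : ℕ) = min (u.2 : ℕ) 1 := rfl
          have e3 : ((pr v).1 : ℕ) = (v.1 : ℕ) := rfl
          have e4 : ((pr v).2 : ℕ) = min (v.2 : ℕ) 1 := rfl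
          show _ ∨ _
          rw [e1, e2, e3, e4]
          omega
        · exact IH u huT hu2
      have hinj : Set.InjOn pr ↑T'' := by
        intro a ha b hb hab
        rw [Finset.mem_coe, hT'', Finset.mem_filter] at ha hb
        simp only [hpr, Prod.ext_iff, Fin.ext_iff] at hab ⊢
        omega
      have hcount : (if ((pr v).2 : ℕ) = 0 then 3 else 2) ≤
          ((slabNbrs (pr v)).filter (fun u => get F u = true)).card := by
        calc _ ≤ T''.card := hneed
        _ = (T''.image pr).card := (Finset.card_image_of_injOn hinj).symm
        _ ≤ _ := Finset.card_le_card himg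
      exact L6_closed F (L2_fix (mk f)) (pr v) hcount
  -- percolation fills the slab
  have hfull : F = full := by
    apply L5_full
    intro w
    have hw := key (emb w) (hperc (emb w)) (by exact w.2.isLt)
    have : pr (emb w) = w := by
      simp only [hpr, hemb, Prod.ext_iff, Fin.ext_iff]
      refine ⟨trivial, ?_⟩
      show min ((w.2 : ℕ)) 1 = (w.2 : ℕ)
      have := w.2.isLt
      omega
    rwa [this] at hw
  obtain ⟨h5, h3⟩ := L3_key (mk f) hfull
  -- counting
  have hinj : Function.Injective emb := by
    intro a b hab
    simp only [hemb, Prod.ext_iff, Fin.ext_iff] at hab ⊢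
    exact hab
  constructor
  · -- 3 ≤ col-0 count
    rw [cnt0_mk] at h3
    have : ∑ i : Fin 5, (if f (i, 0) = true then 1 else 0) =
        (Finset.univ.filter (fun i : Fin 5 => emb (i, 0) ∈ S)).card := by
      rw [Finset.card_filter]
      refine Finset.sum_congr rfl (fun i _ => ?_)
      simp [hf]
    rw [this] at h3
    refine le_trans h3 (Finset.card_le_card_of_injOn (fun i => emb (i, 0)) ?_ ?_)
    · intro i hi
      rw [Finset.mem_coe, Finset.mem_filter] at hi ⊢
      exact ⟨hi.2, rfl⟩
    · intro a _ b _ hab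
      have := hinj hab
      simpa using this
  · -- 5 ≤ cols ≤ 1 count
    rw [cnt_mk] at h5
    have : ∑ w : Fin 5 × Fin 2, (if f w = true then 1 else 0) =
        (Finset.univ.filter (fun w : Fin 5 × Fin 2 => emb w ∈ S)).card := by
      rw [Finset.card_filter]
      refine Finset.sum_congr rfl (fun w _ => ?_)
      simp [hf]
    rw [this] at h5
    refine le_trans h5 (Finset.card_le_card_of_injOn emb ?_ ?_)
    · intro w hw
      rw [Finset.mem_coe, Finset.mem_filter] at hw ⊢
      refine ⟨hw.2, ?_⟩
      show ((w.2 : ℕ)) ≤ 1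
      have := w.2.isLt
      omega
    · exact fun a _ b _ hab => hinj hab


def revmap (m : ℕ) : Fin 5 × Fin m → Fin 5 × Fin m :=
  fun v => (v.1, ⟨m - 1 - (v.2 : ℕ), by have := v.2.isLt; omega⟩)

lemma revmap_fst {m : ℕ} (v : Fin 5 × Fin m) : ((revmap m v).1 : ℕ) = (v.1 : ℕ) := rfl
lemma revmap_snd {m : ℕ} (v : Fin 5 × Fin m) : ((revmap m v).2 : ℕ) = m - 1 - (v.2 : ℕ) := rfl

lemma revmap_invol {m : ℕ} (v : Fin 5 × Fin m) : revmap m (revmap m v) = v := by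
  have h := v.2.isLt
  simp only [revmap, Prod.ext_iff, Fin.ext_iff]
  refine ⟨trivial, ?_⟩
  show m - 1 - (m - 1 - (v.2 : ℕ)) = (v.2 : ℕ)
  omega

lemma revmap_inj {m : ℕ} : Function.Injective (revmap m) := by
  intro a b h
  have := congrArg (revmap m) h
  rwa [revmap_invol, revmap_invol] at this

lemma cols_adj {m : ℕ} {u v : Fin 5 × Fin m}
    (h : ((u.1:ℕ) = v.1 ∧ ((u.2:ℕ)+1 = v.2 ∨ (v.2:ℕ)+1 = u.2)) ∨
    ((u.2:ℕ) = (v.2:ℕ) ∧ ((u.1:ℕ)+1 = v.1 ∨ (v.1:ℕ)+1 = u.1))) :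
    (gridGraph 5 m).Adj u v := by
  simp only [gridGraph, boxProd_adj, pathGraph_adj]
  rcases h with ⟨h1, h2⟩ | ⟨h1, h2⟩
  · exact Or.inr ⟨h2, Fin.ext h1⟩
  · exact Or.inl ⟨h2, Fin.ext h1⟩

lemma revmap_adj {m : ℕ} {u v : Fin 5 × Fin m} (h : (gridGraph 5 m).Adj u v) :
    (gridGraph 5 m).Adj (revmap m u) (revmap m v) := by
  have hc := adj_cols h
  have hu := u.2.isLt
  have hv := v.2.isLt
  apply cols_adj
  rw [revmap_fst, revmap_fst, revmap_snd, revmap_snd]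
  omega

lemma infected_rev {m : ℕ} {S : Finset (Fin 5 × Fin m)} {v : Fin 5 × Fin m}
    (hv : Infected (gridGraph 5 m) 3 (↑S) v) :
    Infected (gridGraph 5 m) 3 (↑(S.image (revmap m))) (revmap m v) := by
  induction hv with
  | @init v h =>
    exact Infected.init (by
      rw [Finset.coe_image]
      exact Set.mem_image_of_mem _ h)
  | @step v T' hc ha hi IH =>
    refine Infected.step (T'.image (revmap m)) ?_ ?_ ?_
    · rw [Finset.card_image_of_injective _ revmap_inj]; exact hc
    · intro x hx
      rw [Finset.mem_image] at hx
      obtain ⟨u, hu, rfl⟩ := hx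
      exact revmap_adj (ha u hu)
    · intro x hx
      rw [Finset.mem_image] at hx
      obtain ⟨u, hu, rfl⟩ := hx
      exact IH u hu


theorem stmt_11 (m : ℕ) (hm : 5 ≤ m) (S : Finset (Fin 5 × Fin m))
    (hmin : S.card = percNum (Fin 5 × Fin m) (gridGraph 5 m) 3)
    (hperc : Percolates (gridGraph 5 m) 3 (↑S))
    (hcons : (¬ ∃ u v z, u ∈ S ∧ v ∈ S ∧ z ∈ S ∧
      (gridGraph 5 m).Adj u v ∧ (gridGraph 5 m).Adj v z ∧ u ≠ z ∧
      IsBoundary (gridGraph 5 m) u ∧ IsBoundary (gridGraph 5 m) v ∧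
      IsBoundary (gridGraph 5 m) z)) :
    3 ≤ (S.filter (fun v => (v.2 : ℕ) = 0)).card ∧
    5 ≤ (S.filter (fun v => (v.2 : ℕ) ≤ 1)).card ∧
    3 ≤ (S.filter (fun v => (v.2 : ℕ) = m - 1)).card ∧
    5 ≤ (S.filter (fun v => m - 2 ≤ (v.2 : ℕ))).card := by
  obtain ⟨hA, hB⟩ := half m hm S hperc
  set S' := S.image (revmap m) with hS'
  have hperc' : Percolates (gridGraph 5 m) 3 (↑S') := by
    intro v
    have h := infected_rev (hperc (revmap m v))
    rwa [revmap_invol] at h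
  obtain ⟨hC, hD⟩ := half m hm S' hperc'
  have hmemS : ∀ x, x ∈ S' → revmap m x ∈ S := by
    intro x hx
    rw [hS', Finset.mem_image] at hx
    obtain ⟨u, hu, rfl⟩ := hx
    rwa [revmap_invol]
  refine ⟨hA, hB, ?_, ?_⟩
  · refine le_trans hC (Finset.card_le_card_of_injOn (revmap m) ?_ revmap_inj.injOn)
    intro x hx
    rw [Finset.mem_coe, Finset.mem_filter] at hx ⊢
    have hxl := x.2.isLt
    refine ⟨hmemS x hx.1, ?_⟩
    rw [revmap_snd]
    omega
  · refine le_trans hD (Finset.card_le_card_of_injOn (revmap m) ?_ revmap_inj.injOn)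
    intro x hx
    rw [Finset.mem_coe, Finset.mem_filter] at hx ⊢
    have hxl := x.2.isLt
    refine ⟨hmemS x hx.1, ?_⟩
    rw [revmap_snd]
    omega
end
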